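/- arXiv:1811.00444 — 13 statements merged into one kernel-verified Lean document; each statement's English description precedes it below -/
import Mathlib

section
/- Let P = {x ∈ ℝ^n : Ax = b, Bx ≤ d} be a pointed polyhedron, let g ∈ ker(A) \ {0}, and let B' be the maximal row-submatrix of B satisfying B'g = 0. Then g is a circuit direction of P if and only if rank of the stacked matrix (A; B') equals n−1. -/
/-- For a pointed polyhedron `P = {x : Ax = b, Bx ≤ d}` and a nonzero
`g ∈ ker A`, letting `B'` be the maximal row-submatrix of `B` with `B'g = 0`,
`g` is a circuit direction of `P` (i.e. `Bg` is support-minimal over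
`{Bx : x ∈ ker A \ {0}}`) iff `rank (A; B') = n - 1`. -/
theorem circuit_direction_iff_rank {n mA mB : ℕ}
    (A : Matrix (Fin mA) (Fin n) ℝ) (B : Matrix (Fin mB) (Fin n) ℝ)
    (hpointed : (Matrix.fromRows A B).rank = n)
    (g : Fin n → ℝ) (hg0 : g ≠ 0) (hgA : A.mulVec g = 0) :
    (¬ ∃ y : Fin n → ℝ, y ≠ 0 ∧ A.mulVec y = 0 ∧
        {j | B.mulVec y j ≠ 0} ⊂ {j | B.mulVec g j ≠ 0}) ↔
    (Matrix.fromRows A (B.submatrix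
        (fun i : {j : Fin mB // B.mulVec g j = 0} => (i : Fin mB)) id)).rank = n - 1 := by
  classical
  set B' : Matrix {j : Fin mB // B.mulVec g j = 0} (Fin n) ℝ :=
    B.submatrix (fun i : {j : Fin mB // B.mulVec g j = 0} => (i : Fin mB)) id with hB'
  set M := Matrix.fromRows A B' with hM
  -- membership in the kernel of M
  have hmem : ∀ y : Fin n → ℝ, M.mulVec y = 0 ↔
      (A.mulVec y = 0 ∧ ∀ j, B.mulVec g j = 0 → B.mulVec y j = 0) := by
    intro y
    have hB'v : ∀ (i : {j : Fin mB // B.mulVec g j = 0}),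
        B'.mulVec y i = B.mulVec y (i : Fin mB) := by
      intro i; simp [hB', Matrix.mulVec, Matrix.submatrix, dotProduct]; rfl
    constructor
    · intro h
      have h' : Sum.elim (A.mulVec y) (B'.mulVec y) = 0 := by
        simpa [hM, Matrix.fromRows_mulVec] using h
      constructor
      · ext i; exact congrFun h' (Sum.inl i)
      · intro j hj
        have := congrFun h' (Sum.inr ⟨j, hj⟩)
        simpa [hB'v] using this
    · rintro ⟨h1, h2⟩
      rw [hM, Matrix.fromRows_mulVec]
      ext (i | i)
      · exact congrFun h1 i
      · simpa [hB'v] using h2 i i.2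
  -- g is in the kernel of M
  have hgM : M.mulVec g = 0 := (hmem g).2 ⟨hgA, fun j hj => hj⟩
  -- n ≥ 1
  have hn : 1 ≤ n := by
    rcases Nat.eq_zero_or_pos n with h | h
    · exact absurd (funext fun i => absurd i.2 (by omega)) hg0
    · exact h
  -- pointedness: kernel of fromRows A B is trivial
  have hkerAB : LinearMap.ker (Matrix.fromRows A B).mulVecLin = ⊥ := by
    have h1 := LinearMap.finrank_range_add_finrank_ker (Matrix.fromRows A B).mulVecLin
    rw [Module.finrank_pi ℝ] at h1
    simp only [Fintype.card_fin] at h1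
    have h2 : Module.finrank ℝ (LinearMap.ker (Matrix.fromRows A B).mulVecLin) = 0 := by
      have : (Matrix.fromRows A B).rank
          = Module.finrank ℝ (LinearMap.range (Matrix.fromRows A B).mulVecLin) := rfl
      omega
    exact Submodule.finrank_eq_zero.mp h2
  -- Bg ≠ 0
  have hBg : B.mulVec g ≠ 0 := by
    intro h
    apply hg0
    have : g ∈ LinearMap.ker (Matrix.fromRows A B).mulVecLin := by
      simp only [LinearMap.mem_ker, Matrix.mulVecLin_apply, Matrix.fromRows_mulVec,
        hgA, h]
      ext (i | i) <;> rfl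
    rw [hkerAB] at this
    simpa using this
  obtain ⟨j0, hj0⟩ : ∃ j, B.mulVec g j ≠ 0 := by
    by_contra h
    push_neg at h
    exact hBg (funext h)
  -- rank-nullity for M
  have hrn := LinearMap.finrank_range_add_finrank_ker M.mulVecLin
  rw [Module.finrank_pi ℝ] at hrn
  simp only [Fintype.card_fin] at hrn
  have hrank : M.rank = Module.finrank ℝ (LinearMap.range M.mulVecLin) := rfl
  -- span g ≤ ker M
  have hspan_le : Submodule.span ℝ {g} ≤ LinearMap.ker M.mulVecLin := by
    rw [Submodule.span_singleton_le_iff_mem]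
    simpa [LinearMap.mem_ker] using hgM
  have hfspan : Module.finrank ℝ (Submodule.span ℝ {g}) = 1 :=
    finrank_span_singleton hg0
  -- main equivalence through ker M = span {g}
  have key : (¬ ∃ y : Fin n → ℝ, y ≠ 0 ∧ A.mulVec y = 0 ∧
      {j | B.mulVec y j ≠ 0} ⊂ {j | B.mulVec g j ≠ 0}) ↔
      LinearMap.ker M.mulVecLin = Submodule.span ℝ {g} := by
    constructor
    · intro hmin
      refine le_antisymm ?_ hspan_le
      intro y hy
      rw [LinearMap.mem_ker, Matrix.mulVecLin_apply, hmem] at hy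
      obtain ⟨hyA, hyB⟩ := hy
      by_contra hys
      rw [Submodule.mem_span_singleton] at hys
      set c : ℝ := B.mulVec y j0 / B.mulVec g j0 with hc
      set z : Fin n → ℝ := y - c • g with hz
      apply hmin
      refine ⟨z, ?_, ?_, ?_, ?_⟩
      · intro h
        apply hys
        exact ⟨c, by rw [eq_comm, ← sub_eq_zero]; simpa [hz] using h⟩
      · rw [hz]; simp [Matrix.mulVec_sub, Matrix.mulVec_smul, hyA, hgA]
      · intro j hj
        simp only [Set.mem_setOf_eq] at hj ⊢
        intro hgj
        apply hj
        rw [hz, Matrix.mulVec_sub, Matrix.mulVec_smul]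
        simp [hyB j hgj, hgj]
      · intro hsub
        have hj0' : B.mulVec z j0 ≠ 0 := hsub (by simpa using hj0)
        apply hj0'
        rw [hz, Matrix.mulVec_sub, Matrix.mulVec_smul]
        simp only [Pi.sub_apply, Pi.smul_apply, smul_eq_mul, hc]
        field_simp
        ring
    · intro hker
      rintro ⟨y, hy0, hyA, hsub⟩
      have hyB : ∀ j, B.mulVec g j = 0 → B.mulVec y j = 0 := by
        intro j hgj
        by_contra h
        exact (hsub.1 h) hgj
      have hy : y ∈ LinearMap.ker M.mulVecLin := by
        rw [LinearMap.mem_ker, Matrix.mulVecLin_apply, hmem]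
        exact ⟨hyA, hyB⟩
      rw [hker, Submodule.mem_span_singleton] at hy
      obtain ⟨c, hcy⟩ := hy
      have hc0 : c ≠ 0 := by
        rintro rfl
        apply hy0
        simp [← hcy]
      -- then supports are equal, contradicting strictness
      apply hsub.2
      intro j hj
      simp only [Set.mem_setOf_eq] at hj ⊢
      rw [← hcy, Matrix.mulVec_smul]
      simp only [Pi.smul_apply, smul_eq_mul]
      exact mul_ne_zero hc0 hj
  rw [key]
  -- now: ker M = span g ↔ rank M = n - 1
  constructor
  · intro hker
    have : Module.finrank ℝ (LinearMap.ker M.mulVecLin) = 1 := by rw [hker]; exact hfspan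
    omega
  · intro hr
    have hfk : Module.finrank ℝ (LinearMap.ker M.mulVecLin) = 1 := by omega
    refine (Submodule.eq_of_le_of_finrank_le hspan_le ?_).symm
    rw [hfk, hfspan]
end

section
/- Let P be pointed and let g ∈ ker(A) \ {0} be such that Bg is support-minimal over {Bx : x ∈ ker(A)\{0}}. If x' ∈ ker(A)\{0} satisfies supp(Bx') = supp(Bg), then x' = αg for some nonzero scalar α. -/
lemma pointed_inj {n : ℕ} {m : Type*} [Fintype m] (M : Matrix m (Fin n) ℝ) (h : M.rank = n)
    (x : Fin n → ℝ) (hx : M.mulVec x = 0) : x = 0 := by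
  have hrn : Module.finrank ℝ (LinearMap.range M.mulVecLin)
      + Module.finrank ℝ (LinearMap.ker M.mulVecLin) = n := by
    simpa using LinearMap.finrank_range_add_finrank_ker M.mulVecLin
  have hker : Module.finrank ℝ (LinearMap.ker M.mulVecLin) = 0 := by
    have h2 : M.rank = Module.finrank ℝ (LinearMap.range M.mulVecLin) := rfl
    omega
  have : LinearMap.ker M.mulVecLin = ⊥ := Submodule.finrank_eq_zero.mp hker
  have hx' : x ∈ LinearMap.ker M.mulVecLin := by
    simpa [LinearMap.mem_ker, Matrix.mulVecLin_apply] using hx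
  rw [this] at hx'
  simpa using hx'

/-- If `P` is pointed, `g ∈ ker A \ {0}` has `Bg` support-minimal over
`{Bx : x ∈ ker A \ {0}}`, and `x' ∈ ker A \ {0}` satisfies `supp(Bx') = supp(Bg)`,
then `x' = α • g` for some nonzero scalar `α`. -/
theorem eq_smul_of_supp_eq {n mA mB : ℕ}
    (A : Matrix (Fin mA) (Fin n) ℝ) (B : Matrix (Fin mB) (Fin n) ℝ)
    (hpointed : (Matrix.fromRows A B).rank = n)
    (g : Fin n → ℝ) (hg0 : g ≠ 0) (hgA : A.mulVec g = 0)
    (hmin : ¬ ∃ y : Fin n → ℝ, y ≠ 0 ∧ A.mulVec y = 0 ∧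
      {j | B.mulVec y j ≠ 0} ⊂ {j | B.mulVec g j ≠ 0})
    (x' : Fin n → ℝ) (hx'0 : x' ≠ 0) (hx'A : A.mulVec x' = 0)
    (hsupp : {j | B.mulVec x' j ≠ 0} = {j | B.mulVec g j ≠ 0}) :
    ∃ α : ℝ, α ≠ 0 ∧ x' = α • g := by
  -- supp(Bg) nonempty, else Bg = 0 and pointedness forces g = 0
  have hne : {j | B.mulVec g j ≠ 0}.Nonempty := by
    by_contra hemp
    rw [Set.not_nonempty_iff_eq_empty] at hemp
    have hBg : B.mulVec g = 0 := by
      funext j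
      by_contra hj
      exact absurd (hemp ▸ (hj : j ∈ {j | B.mulVec g j ≠ 0})) (Set.notMem_empty j)
    apply hg0
    apply pointed_inj _ hpointed
    rw [Matrix.fromRows_mulVec, hgA, hBg]
    ext (i | i) <;> simp
  obtain ⟨j0, hj0⟩ := hne
  set α : ℝ := B.mulVec x' j0 / B.mulVec g j0 with hα
  have hj0' : B.mulVec x' j0 ≠ 0 := by rw [← hsupp] at hj0; exact hj0
  have hαne : α ≠ 0 := div_ne_zero hj0' hj0
  refine ⟨α, hαne, ?_⟩
  set y : Fin n → ℝ := x' - α • g with hy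
  have hyA : A.mulVec y = 0 := by
    rw [hy, Matrix.mulVec_sub, Matrix.mulVec_smul, hx'A, hgA]
    simp
  have hyB : ∀ j, B.mulVec y j = B.mulVec x' j - α * B.mulVec g j := by
    intro j
    rw [hy, Matrix.mulVec_sub, Matrix.mulVec_smul]
    simp
  have hyj0 : B.mulVec y j0 = 0 := by
    rw [hyB, hα, div_mul_cancel₀ _ hj0, sub_self]
  have hsub : {j | B.mulVec y j ≠ 0} ⊆ {j | B.mulVec g j ≠ 0} := by
    intro j hj
    simp only [Set.mem_setOf_eq] at hj ⊢
    intro hgj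
    apply hj
    rw [hyB, hgj]
    have : B.mulVec x' j = 0 := by
      by_contra h
      have : j ∈ {j | B.mulVec g j ≠ 0} := hsupp ▸ h
      exact this hgj
    rw [this]; ring
  have hy0 : y = 0 := by
    by_contra hyne
    refine hmin ⟨y, hyne, hyA, hsub, fun hsup => ?_⟩
    have := hsup hj0
    simp [hyj0] at this
  have : x' - α • g = 0 := hy0
  exact sub_eq_zero.mp this
end

section
/- Let B ∈ ℝ^{m×n} be a matrix all of whose square subdeterminants (of every size) are nonzero, with m ≥ n−1. Then the number of circuits of the polyhedron {x : Bx ≤ d} equals 2·binomial(m, n−1); i.e., each choice of n−1 rows of B yields a distinct pair of opposite circuit directions. -/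
open Matrix Finset

section helpers
variable {m ν : ℕ} (B : Matrix (Fin m) (Fin (ν+1)) ℝ)

/-- If `B *ᵥ g` vanishes on `ν+1` distinct rows, then `g = 0`. -/
lemma auxA (hdet : ∀ (k : ℕ) (r : Fin k → Fin m) (c : Fin k → Fin (ν+1)),
      Function.Injective r → Function.Injective c → (B.submatrix r c).det ≠ 0)
    {g : Fin (ν+1) → ℝ} {r : Fin (ν+1) → Fin m} (hr : Function.Injective r)
    (h0 : ∀ k, B.mulVec g (r k) = 0) : g = 0 := by
  have hd := hdet (ν+1) r id hr Function.injective_id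
  refine Matrix.eq_zero_of_mulVec_eq_zero hd ?_
  funext k
  simpa [Matrix.mulVec, Matrix.submatrix_apply, dotProduct] using h0 k

/-- The zero set of `B *ᵥ g` has at most `ν` elements for `g ≠ 0`. -/
lemma auxA' (hdet : ∀ (k : ℕ) (r : Fin k → Fin m) (c : Fin k → Fin (ν+1)),
      Function.Injective r → Function.Injective c → (B.submatrix r c).det ≠ 0)
    {g : Fin (ν+1) → ℝ} (hg : g ≠ 0) :
    (Finset.filter (fun i => B.mulVec g i = 0) Finset.univ).card ≤ ν := by
  by_contra hlt
  push_neg at hlt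
  obtain ⟨T, hTsub, hTcard⟩ := Finset.exists_subset_card_eq hlt
  refine hg (auxA B hdet (r := fun k => T.orderEmbOfFin hTcard k)
    (fun a b hab => (T.orderEmbOfFin hTcard).injective hab) fun k => ?_)
  have : (T.orderEmbOfFin hTcard k : Fin m) ∈ T := Finset.orderEmbOfFin_mem _ _ _
  have := hTsub this
  simpa using (Finset.mem_filter.mp this).2


/-- Existence: for any `ν` rows there is a nonzero vector killed by those rows. -/
lemma auxB {R : Finset (Fin m)} (hR : R.card = ν) :
    ∃ v : Fin (ν+1) → ℝ, v ≠ 0 ∧ ∀ i ∈ R, B.mulVec v i = 0 := by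
  classical
  set r := R.orderEmbOfFin hR with hr
  set M : Matrix (Fin (ν+1)) (Fin (ν+1)) ℝ :=
    fun i j => if h : (i : ℕ) < ν then B (r ⟨i, h⟩) j else 0 with hM
  have hdet0 : M.det = 0 := by
    refine Matrix.det_eq_zero_of_row_eq_zero (Fin.last ν) fun j => ?_
    simp [hM]
  obtain ⟨v, hv0, hv⟩ := (Matrix.exists_mulVec_eq_zero_iff).mpr hdet0
  refine ⟨v, hv0, fun i hi => ?_⟩
  have : i ∈ Set.range r := by rw [Finset.range_orderEmbOfFin]; exact hi
  obtain ⟨k, rfl⟩ := this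
  have hk : ((Fin.castSucc k : Fin (ν+1)) : ℕ) < ν := k.isLt
  have := congrFun hv (Fin.castSucc k)
  simpa [Matrix.mulVec, dotProduct, hM, hk, Fin.castSucc] using this

/-- If `u` is killed by `ν` rows and some coordinate of `u` vanishes, `u = 0`. -/
lemma auxC1 (hdet : ∀ (k : ℕ) (r : Fin k → Fin m) (c : Fin k → Fin (ν+1)),
      Function.Injective r → Function.Injective c → (B.submatrix r c).det ≠ 0)
    {R : Finset (Fin m)} (hR : R.card = ν) {u : Fin (ν+1) → ℝ} (j0 : Fin (ν+1))
    (hu : ∀ i ∈ R, B.mulVec u i = 0) (hu0 : u j0 = 0) : u = 0 := by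
  classical
  set r : Fin ν → Fin m := fun k => R.orderEmbOfFin hR k with hrdef
  have hrinj : Function.Injective r := fun a b hab => (R.orderEmbOfFin hR).injective hab
  set N := B.submatrix r j0.succAbove with hN
  have hNdet : N.det ≠ 0 :=
    hdet ν r j0.succAbove hrinj (Fin.succAbove_right_injective)
  have hker : N.mulVec (u ∘ j0.succAbove) = 0 := by
    funext k
    have hsum := Fin.sum_univ_succAbove (fun j => B (r k) j * u j) j0
    have hmem : (r k : Fin m) ∈ R := Finset.orderEmbOfFin_mem _ _ _
    have h0 : B.mulVec u (r k) = 0 := hu _ hmem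
    simp only [Matrix.mulVec, dotProduct] at h0 ⊢
    simp only [hN, Matrix.submatrix_apply, Function.comp]
    rw [h0, hu0, mul_zero, zero_add] at hsum
    simpa using hsum.symm
  have : u ∘ j0.succAbove = 0 := Matrix.eq_zero_of_mulVec_eq_zero hNdet hker
  funext j
  rcases eq_or_ne j j0 with rfl | hne
  · exact hu0
  · obtain ⟨t, rfl⟩ := Fin.exists_succAbove_eq hne
    exact congrFun this t

/-- Uniqueness up to scalar for vectors killed by `ν` rows. -/
lemma auxC (hdet : ∀ (k : ℕ) (r : Fin k → Fin m) (c : Fin k → Fin (ν+1)),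
      Function.Injective r → Function.Injective c → (B.submatrix r c).det ≠ 0)
    {R : Finset (Fin m)} (hR : R.card = ν) {v w : Fin (ν+1) → ℝ} (hv0 : v ≠ 0)
    (hv : ∀ i ∈ R, B.mulVec v i = 0) (hw : ∀ i ∈ R, B.mulVec w i = 0) :
    ∃ c : ℝ, w = c • v := by
  have hvne : v 0 ≠ 0 := fun h => hv0 (auxC1 B hdet hR 0 hv h)
  refine ⟨w 0 / v 0, ?_⟩
  have hdiff : ∀ i ∈ R, B.mulVec (w - (w 0 / v 0) • v) i = 0 := by
    intro i hi
    simp only [Matrix.mulVec_sub, Matrix.mulVec_smul, Pi.sub_apply, Pi.smul_apply,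
      hv i hi, hw i hi, smul_zero, sub_zero]
  have h0 : (w - (w 0 / v 0) • v) 0 = 0 := by
    rw [Pi.sub_apply, Pi.smul_apply, smul_eq_mul, div_mul_cancel₀ _ hvne, sub_self]
  have := auxC1 B hdet hR 0 hdiff h0
  have := sub_eq_zero.mp this
  exact this


/-- Exact zero set: a nonzero vector killed by `ν` rows is killed by exactly those rows. -/
lemma auxD (hdet : ∀ (k : ℕ) (r : Fin k → Fin m) (c : Fin k → Fin (ν+1)),
      Function.Injective r → Function.Injective c → (B.submatrix r c).det ≠ 0)
    {R : Finset (Fin m)} (hR : R.card = ν) {v : Fin (ν+1) → ℝ} (hv0 : v ≠ 0)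
    (hv : ∀ i ∈ R, B.mulVec v i = 0) : ∀ i, B.mulVec v i = 0 ↔ i ∈ R := by
  intro i
  refine ⟨fun h0 => ?_, fun hi => hv i hi⟩
  by_contra hiR
  set r : Fin ν → Fin m := fun k => R.orderEmbOfFin hR k with hrdef
  have hrinj : Function.Injective r := fun a b hab => (R.orderEmbOfFin hR).injective hab
  have hrmem : ∀ k, r k ∈ R := fun k => Finset.orderEmbOfFin_mem _ _ _
  set r' : Fin (ν+1) → Fin m := fun k => if h : (k : ℕ) < ν then r ⟨k, h⟩ else i with hr'
  have hr'inj : Function.Injective r' := by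
    intro a b hab
    simp only [hr'] at hab
    split_ifs at hab with h1 h2 h2
    · have := congrArg Fin.val (hrinj hab)
      simp only at this
      exact Fin.ext this
    · exact absurd (hab ▸ hrmem ⟨a, h1⟩) hiR
    · exact absurd (hab ▸ hrmem ⟨b, h2⟩ : i ∈ R) hiR
    · have ha := a.isLt; have hb := b.isLt
      exact Fin.ext (by omega)
  have hall : ∀ k, B.mulVec v (r' k) = 0 := by
    intro k
    simp only [hr']
    split_ifs with h1
    · exact hv _ (hrmem _)
    · exact h0
  exact hv0 (auxA B hdet hr'inj hall)

end helpers

/-- If every square subdeterminant of `B : ℝ^{m×n}` is nonzero and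
`m ≥ n - 1`, then the polyhedron `{x : Bx ≤ d}` has exactly `2 * (m choose (n-1))`
circuits: counting one representative of each circuit direction per sign
(normalized here to norm one, so each direction line contributes two vectors). -/
theorem card_circuits_of_nonzero_subdets {m n : ℕ} (hn : 1 ≤ n) (hm : n - 1 ≤ m)
    (B : Matrix (Fin m) (Fin n) ℝ)
    (hdet : ∀ (k : ℕ) (r : Fin k → Fin m) (c : Fin k → Fin n),
      Function.Injective r → Function.Injective c → (B.submatrix r c).det ≠ 0) :
    {g : Fin n → ℝ | ‖g‖ = 1 ∧
        ¬ ∃ y : Fin n → ℝ, y ≠ 0 ∧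
          {j | B.mulVec y j ≠ 0} ⊂ {j | B.mulVec g j ≠ 0}}.ncard
      = 2 * Nat.choose m (n - 1) := by
  classical
  obtain ⟨ν, rfl⟩ : ∃ ν, n = ν + 1 := ⟨n - 1, (Nat.succ_pred_eq_of_pos hn).symm⟩
  simp only [Nat.add_sub_cancel] at hm ⊢
  -- choose normalized kernel vectors
  have hex : ∀ R : Finset (Fin m), ∃ u : Fin (ν+1) → ℝ,
      R.card = ν → (‖u‖ = 1 ∧ ∀ i, B.mulVec u i = 0 ↔ i ∈ R) := by
    intro R
    by_cases hR : R.card = ν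
    · obtain ⟨v, hv0, hv⟩ := auxB B hR
      refine ⟨‖v‖⁻¹ • v, fun _ => ⟨?_, ?_⟩⟩
      · rw [norm_smul, norm_inv, norm_norm, inv_mul_cancel₀ (norm_ne_zero_iff.mpr hv0)]
      · have hne : (‖v‖⁻¹ • v : Fin (ν+1) → ℝ) ≠ 0 := by
          simp [smul_eq_zero, hv0, norm_ne_zero_iff.mpr hv0]
        refine auxD B hdet hR hne fun i hi => ?_
        simp only [Matrix.mulVec_smul, Pi.smul_apply, hv i hi, smul_zero]
    · exact ⟨0, fun h => absurd h hR⟩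
  choose u hu using hex
  -- the zero-set of B *ᵥ g as a finset
  set Z : (Fin (ν+1) → ℝ) → Finset (Fin m) :=
    fun g => Finset.filter (fun i => B.mulVec g i = 0) Finset.univ with hZ
  have hZmem : ∀ g i, i ∈ Z g ↔ B.mulVec g i = 0 := by
    intro g i; simp [hZ]
  -- the set equals a finite union
  set T : Finset (Fin (ν+1) → ℝ) :=
    (Finset.powersetCard ν (Finset.univ : Finset (Fin m))).biUnion
      (fun R => {u R, -u R}) with hT
  have hset : {g : Fin (ν+1) → ℝ | ‖g‖ = 1 ∧
        ¬ ∃ y : Fin (ν+1) → ℝ, y ≠ 0 ∧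
          {j | B.mulVec y j ≠ 0} ⊂ {j | B.mulVec g j ≠ 0}} = ↑T := by
    ext g
    simp only [Set.mem_setOf_eq, Finset.coe_biUnion, Set.mem_iUnion, hT,
      Finset.mem_coe, Finset.mem_biUnion, Finset.mem_powersetCard_univ,
      Finset.mem_insert, Finset.mem_singleton]
    constructor
    · rintro ⟨hg1, hg2⟩
      have hg0 : g ≠ 0 := fun h => by simp [h] at hg1
      have hZle : (Z g).card ≤ ν := auxA' B hdet hg0
      have hZcard : (Z g).card = ν := by
        by_contra hne
        have hlt : (Z g).card < ν := lt_of_le_of_ne hZle hne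
        obtain ⟨R, hZR, hRuniv, hRcard⟩ := Finset.exists_subsuperset_card_eq
          (Finset.subset_univ (Z g)) hZle (by simpa using hm)
        obtain ⟨hu1, hu2⟩ := hu R hRcard
        have hune : u R ≠ 0 := fun h => by simp [h] at hu1
        refine hg2 ⟨u R, hune, ?_, ?_⟩
        · intro j hj
          simp only [Set.mem_setOf_eq] at hj ⊢
          intro h0
          exact hj ((hu2 j).mpr (hZR ((hZmem g j).mpr h0)))
        · intro hsub
          have hZRssub : Z g ⊂ R := hZR.ssubset_of_ne (fun h => by rw [h] at hlt; omega)
          obtain ⟨j, hjR, hjZ⟩ := Finset.exists_of_ssubset hZRssub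
          have h1 : B.mulVec g j ≠ 0 := fun h => hjZ ((hZmem g j).mpr h)
          have h2 : B.mulVec (u R) j = 0 := (hu2 j).mpr hjR
          exact (hsub h1) h2
      -- g is a kernel vector for Z g
      obtain ⟨hu1, hu2⟩ := hu (Z g) hZcard
      have hune : u (Z g) ≠ 0 := fun h => by simp [h] at hu1
      obtain ⟨c, hc⟩ := auxC B hdet hZcard hune
        (fun i hi => (hu2 i).mpr hi) (fun i hi => (hZmem g i).mp hi)
      have hcabs : |c| = 1 := by
        have := hg1
        rw [hc, norm_smul, hu1, mul_one] at this
        simpa using this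
      rcases abs_eq (by norm_num : (0:ℝ) ≤ 1) |>.mp hcabs with h1 | h1
      · rw [h1, one_smul] at hc
        exact ⟨Z g, hZcard, Or.inl hc⟩
      · rw [h1, neg_one_smul] at hc
        exact ⟨Z g, hZcard, Or.inr hc⟩
    · rintro ⟨R, hRcard, hg⟩
      obtain ⟨hu1, hu2⟩ := hu R hRcard
      have hgzero : ∀ j, B.mulVec g j = 0 ↔ j ∈ R := by
        intro j
        rcases hg with rfl | rfl
        · exact hu2 j
        · rw [Matrix.mulVec_neg, Pi.neg_apply, neg_eq_zero]; exact hu2 j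
      have hg1 : ‖g‖ = 1 := by rcases hg with rfl | rfl <;> simp [hu1]
      refine ⟨hg1, ?_⟩
      rintro ⟨y, hy0, hysub, hyne⟩
      have hRZy : R ⊆ Z y := by
        intro i hi
        rw [hZmem]
        by_contra h0
        exact (hysub h0) ((hgzero i).mpr hi)
      obtain ⟨j, hjg, hjy⟩ := Set.not_subset.mp hyne
      simp only [Set.mem_setOf_eq, not_not] at hjg hjy
      have hjR : j ∉ R := fun h => hjg ((hgzero j).mpr h)
      have hjZy : j ∈ Z y := (hZmem y j).mpr hjy
      have hcard : ν + 1 ≤ (Z y).card := by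
        have : insert j R ⊆ Z y := Finset.insert_subset hjZy hRZy
        calc ν + 1 = (insert j R).card := by rw [Finset.card_insert_of_notMem hjR, hRcard]
        _ ≤ (Z y).card := Finset.card_le_card this
      have hb : (Z y).card ≤ ν := by
        simp only [hZ]; exact auxA' B hdet hy0
      omega
  have key : ∀ (R : Finset (Fin m)), R.card = ν →
      ∀ g ∈ ({u R, -u R} : Finset (Fin (ν+1) → ℝ)), ∀ j, B.mulVec g j = 0 ↔ j ∈ R := by
    intro R hR g hg j
    obtain ⟨_, hu2⟩ := hu R hR
    rw [Finset.mem_insert, Finset.mem_singleton] at hg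
    rcases hg with rfl | rfl
    · exact hu2 j
    · rw [Matrix.mulVec_neg, Pi.neg_apply, neg_eq_zero]; exact hu2 j
  rw [hset, Set.ncard_coe_finset, hT]
  rw [Finset.card_biUnion]
  · have hcard2 : ∀ R ∈ Finset.powersetCard ν (Finset.univ : Finset (Fin m)),
        ({u R, -u R} : Finset (Fin (ν+1) → ℝ)).card = 2 := by
      intro R hR
      rw [Finset.mem_powersetCard_univ] at hR
      obtain ⟨hu1, _⟩ := hu R hR
      have hune : u R ≠ 0 := fun h => by simp [h] at hu1
      have hnotmem : u R ∉ ({-u R} : Finset (Fin (ν+1) → ℝ)) := by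
        simp only [Finset.mem_singleton]
        intro h
        apply hune
        have h2 : (2:ℝ) • u R = 0 := by
          rw [two_smul]; nth_rewrite 2 [h]; simp
        simpa using (smul_eq_zero.mp h2).resolve_left (by norm_num)
      rw [Finset.card_insert_of_notMem hnotmem, Finset.card_singleton]
    rw [Finset.sum_congr rfl hcard2, Finset.sum_const, Finset.card_powersetCard,
      Finset.card_univ, Fintype.card_fin, smul_eq_mul, mul_comm]
  · intro R hR R' hR' hne
    simp only [Finset.mem_coe, Finset.mem_powersetCard_univ] at hR hR'
    rw [Function.onFun, Finset.disjoint_left]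
    intro g hg hg'
    exact hne (Finset.ext fun j => ((key R hR g hg j).symm.trans (key R' hR' g hg' j)))
end

section
/- Let B ∈ ℝ^{m×n} have all subdeterminants nonzero, let B' be a (d−1)×d submatrix with row set I and column set J, and let g ∈ ℝ^n be the zero-padded extension of a kernel generator g' of B'. Then for every row index i ∉ I, (Bg)_i ≠ 0; hence supp(Bg) is exactly the complement of I. -/
/-- With all square subdeterminants of `B` nonzero, let `B'` be a
`(d-1) × d` submatrix (rows `r`, columns `c`), `g'` a kernel generator of `B'` with all
components nonzero, and `g` the zero-padded extension of `g'` to `ℝ^n`. Then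
`(Bg)_i ≠ 0` for every row `i` outside the rows of `B'`; hence `supp(Bg)` is exactly
the complement of the chosen row set. -/
theorem support_of_extended_kernel_vector {m n d : ℕ} (hd2 : 2 ≤ d) (hdn : d ≤ n)
    (B : Matrix (Fin m) (Fin n) ℝ)
    (hdet : ∀ (k : ℕ) (r : Fin k → Fin m) (c : Fin k → Fin n),
      Function.Injective r → Function.Injective c → (B.submatrix r c).det ≠ 0)
    (r : Fin (d - 1) → Fin m) (c : Fin d → Fin n)
    (hr : Function.Injective r) (hc : Function.Injective c)
    (g' : Fin d → ℝ) (hg'ne : ∀ i, g' i ≠ 0)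
    (hg'ker : (B.submatrix r c).mulVec g' = 0)
    (g : Fin n → ℝ) (hgc : ∀ i, g (c i) = g' i)
    (hgz : ∀ j : Fin n, (∀ i, j ≠ c i) → g j = 0) :
    (∀ i : Fin m, (∀ i', i ≠ r i') → B.mulVec g i ≠ 0) ∧
      {i : Fin m | B.mulVec g i ≠ 0} = {i : Fin m | ∀ i', i ≠ r i'} := by
  have hsum : ∀ i : Fin m, B.mulVec g i = ∑ k, B i (c k) * g' k := by
    intro i
    have h1 : B.mulVec g i = ∑ j, B i j * g j := rfl
    rw [h1]
    rw [show (∑ j, B i j * g j) = ∑ j ∈ Finset.univ.image c, B i j * g j from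
      (Finset.sum_subset (Finset.subset_univ _) (fun j _ hj => by
        have : g j = 0 := hgz j (fun k hk => hj (by subst hk; exact Finset.mem_image_of_mem c (Finset.mem_univ k)))
        simp [this])).symm]
    rw [Finset.sum_image (fun a _ b _ h => hc h)]
    simp [hgc]
  have hzero : ∀ i', B.mulVec g (r i') = 0 := by
    intro i'
    rw [hsum]
    have := congrFun hg'ker i'
    simpa [Matrix.mulVec, dotProduct, Matrix.submatrix] using this
  have hne : ∀ i : Fin m, (∀ i', i ≠ r i') → B.mulVec g i ≠ 0 := by
    intro i hi h0
    set r₂ : Fin d → Fin m := fun k => if h : (k : ℕ) < d - 1 then r ⟨k, h⟩ else i with hr₂def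
    have hr₂ : Function.Injective r₂ := by
      intro a b hab
      simp only [hr₂def] at hab
      by_cases ha : (a : ℕ) < d - 1 <;> by_cases hb : (b : ℕ) < d - 1
      · rw [dif_pos ha, dif_pos hb] at hab
        have h2 : (⟨(a:ℕ), ha⟩ : Fin (d-1)) = ⟨(b:ℕ), hb⟩ := hr hab
        have h3 : (a : ℕ) = (b : ℕ) := by simpa using congrArg Fin.val h2
        exact Fin.ext h3
      · rw [dif_pos ha, dif_neg hb] at hab
        exact absurd hab.symm (hi _)
      · rw [dif_neg ha, dif_pos hb] at hab
        exact absurd hab (hi _)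
      · have : (a : ℕ) = (b : ℕ) := by omega
        exact Fin.ext this
    have hv : (B.submatrix r₂ c).mulVec g' = 0 := by
      funext k
      have hk : (B.submatrix r₂ c).mulVec g' k = ∑ j, B (r₂ k) (c j) * g' j := rfl
      rw [hk]
      by_cases h : (k : ℕ) < d - 1
      · have hrk : r₂ k = r ⟨k, h⟩ := dif_pos h
        rw [hrk]
        have := congrFun hg'ker ⟨k, h⟩
        simpa [Matrix.mulVec, dotProduct, Matrix.submatrix] using this
      · have hrk : r₂ k = i := dif_neg h
        rw [hrk]
        rw [hsum] at h0
        simpa using h0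
    have : g' = 0 := Matrix.eq_zero_of_mulVec_eq_zero (hdet d r₂ c hr₂ hc) hv
    exact hg'ne ⟨0, by omega⟩ (by rw [this]; rfl)
  refine ⟨hne, ?_⟩
  ext i
  simp only [Set.mem_setOf_eq]
  constructor
  · intro h i' hi'
    exact h (hi' ▸ hzero i')
  · exact hne i
end

section
/- Let P = {x : Ax = b, Bx ≤ d} be pointed. Every vector of the form (g, y⁺, y⁻), where g is a circuit of P, y⁺_i = max{(Bg)_i, 0}, y⁻_i = max{−(Bg)_i, 0}, is an extreme ray of the cone C = {(x, y⁺, y⁻) : Ax = 0, Bx = y⁺ − y⁻, y⁺ ≥ 0, y⁻ ≥ 0}. -/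
/-- A matrix with full column rank has trivial kernel. -/
lemma mulVec_eq_zero_of_rank {m : Type*} [Fintype m] {n : ℕ} (M : Matrix m (Fin n) ℝ)
    (h : M.rank = n) (v : Fin n → ℝ) (hv : M.mulVec v = 0) : v = 0 := by
  have h1 := LinearMap.finrank_range_add_finrank_ker M.mulVecLin
  rw [Module.finrank_pi ℝ, Fintype.card_fin] at h1
  have hrank : Module.finrank ℝ (LinearMap.range M.mulVecLin) = n := h
  have hker : Module.finrank ℝ (LinearMap.ker M.mulVecLin) = 0 := by omega
  have : LinearMap.ker M.mulVecLin = ⊥ := Submodule.finrank_eq_zero.mp hker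
  have hvmem : v ∈ LinearMap.ker M.mulVecLin := by
    simpa [Matrix.mulVecLin_apply] using hv
  rw [this] at hvmem
  simpa using hvmem

/-- For a pointed polyhedron `P = {x : Ax = b, Bx ≤ d}` and a circuit `g`
of `P`, the vector `(g, y⁺, y⁻)` with `y⁺ = max(Bg, 0)`, `y⁻ = max(-Bg, 0)` is an
extreme ray of the cone `C = {(x,y⁺,y⁻) : Ax = 0, Bx = y⁺ - y⁻, y⁺,y⁻ ≥ 0}`: every
nonzero element of `C` whose `(y⁺,y⁻)`-support is contained in that of `(g,y⁺,y⁻)` is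
a positive multiple of it. -/
theorem circuit_is_extreme_ray {n mA mB : ℕ}
    (A : Matrix (Fin mA) (Fin n) ℝ) (B : Matrix (Fin mB) (Fin n) ℝ)
    (hpointed : (Matrix.fromRows A B).rank = n)
    (g : Fin n → ℝ) (hg0 : g ≠ 0) (hgA : A.mulVec g = 0)
    (hmin : ¬ ∃ y : Fin n → ℝ, y ≠ 0 ∧ A.mulVec y = 0 ∧
      {j | B.mulVec y j ≠ 0} ⊂ {j | B.mulVec g j ≠ 0})
    (yp ym : Fin mB → ℝ)
    (hyp : ∀ i, yp i = max (B.mulVec g i) 0)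
    (hym : ∀ i, ym i = max (-(B.mulVec g i)) 0) :
    ∀ (x' : Fin n → ℝ) (yp' ym' : Fin mB → ℝ),
      A.mulVec x' = 0 → B.mulVec x' = yp' - ym' →
      (∀ i, 0 ≤ yp' i) → (∀ i, 0 ≤ ym' i) →
      ¬ (x' = 0 ∧ yp' = 0 ∧ ym' = 0) →
      {i | yp' i ≠ 0} ⊆ {i | yp i ≠ 0} → {i | ym' i ≠ 0} ⊆ {i | ym i ≠ 0} →
      ∃ α : ℝ, 0 < α ∧ x' = α • g ∧ yp' = α • yp ∧ ym' = α • ym := by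
  intro x' yp' ym' hAx' hBx' hyp' hym' hne hsp hsm
  -- yp' vanishes where Bg ≤ 0, ym' vanishes where Bg ≥ 0
  have hyp'0 : ∀ i, B.mulVec g i ≤ 0 → yp' i = 0 := by
    intro i hi
    by_contra h
    have := hsp h
    simp only [Set.mem_setOf_eq, hyp i] at this
    exact this (max_eq_right hi)
  have hym'0 : ∀ i, 0 ≤ B.mulVec g i → ym' i = 0 := by
    intro i hi
    by_contra h
    have := hsm h
    simp only [Set.mem_setOf_eq, hym i] at this
    exact this (max_eq_right (by linarith))
  have hBx'0 : ∀ i, B.mulVec g i = 0 → B.mulVec x' i = 0 := by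
    intro i hi
    have h1 : yp' i = 0 := hyp'0 i hi.le
    have h2 : ym' i = 0 := hym'0 i hi.ge
    have := congrFun hBx' i
    simp only [Pi.sub_apply, h1, h2] at this
    linarith
  -- x' ≠ 0
  have hx'ne : x' ≠ 0 := by
    intro hx0
    apply hne
    refine ⟨hx0, ?_, ?_⟩ <;> funext i
    · rcases le_or_gt (B.mulVec g i) 0 with h | h
      · exact hyp'0 i h
      · have h2 : ym' i = 0 := hym'0 i h.le
        have := congrFun hBx' i
        simp only [hx0, Matrix.mulVec_zero, Pi.zero_apply, Pi.sub_apply, h2] at this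
        simpa using this.symm
    · rcases le_or_gt 0 (B.mulVec g i) with h | h
      · exact hym'0 i h
      · have h1 : yp' i = 0 := hyp'0 i h.le
        have := congrFun hBx' i
        simp only [hx0, Matrix.mulVec_zero, Pi.zero_apply, Pi.sub_apply, h1] at this
        simpa using this.symm
  -- support of Bx' equals support of Bg
  have hsub : {j | B.mulVec x' j ≠ 0} ⊆ {j | B.mulVec g j ≠ 0} := by
    intro j hj
    simp only [Set.mem_setOf_eq] at hj ⊢
    intro h
    exact hj (hBx'0 j h)
  have hnotss : ¬ {j | B.mulVec x' j ≠ 0} ⊂ {j | B.mulVec g j ≠ 0} := by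
    intro hss
    exact hmin ⟨x', hx'ne, hAx', hss⟩
  have hsupeq : {j | B.mulVec x' j ≠ 0} = {j | B.mulVec g j ≠ 0} := by
    by_contra h
    exact hnotss ⟨hsub, fun h2 => h (le_antisymm hsub h2)⟩
  -- Bg ≠ 0 somewhere
  have hBgne : ∃ i0, B.mulVec g i0 ≠ 0 := by
    by_contra h
    push_neg at h
    apply hg0
    apply mulVec_eq_zero_of_rank (Matrix.fromRows A B) hpointed
    rw [Matrix.fromRows_mulVec]
    funext i
    cases i with
    | inl i => simpa using congrFun hgA i
    | inr i => simpa using h i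
  obtain ⟨i0, hi0⟩ := hBgne
  have hi0' : B.mulVec x' i0 ≠ 0 := by
    have : i0 ∈ {j | B.mulVec g j ≠ 0} := hi0
    rw [← hsupeq] at this
    exact this
  set α : ℝ := B.mulVec x' i0 / B.mulVec g i0 with hα
  -- α > 0
  have hαpos : 0 < α := by
    rcases lt_or_gt_of_ne hi0 with h | h
    · -- Bg i0 < 0 : Bx' i0 = -ym' i0 ≤ 0
      have h1 : yp' i0 = 0 := hyp'0 i0 h.le
      have h2 : B.mulVec x' i0 = -ym' i0 := by
        have := congrFun hBx' i0; simp only [Pi.sub_apply, h1] at this; linarith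
      have h3 : B.mulVec x' i0 < 0 := by
        rcases lt_or_eq_of_le (hym' i0) with h4 | h4
        · rw [h2]; linarith
        · exfalso; apply hi0'; rw [h2, ← h4]; ring
      exact div_pos_of_neg_of_neg h3 h
    · have h1 : ym' i0 = 0 := hym'0 i0 h.le
      have h2 : B.mulVec x' i0 = yp' i0 := by
        have := congrFun hBx' i0; simp only [Pi.sub_apply, h1] at this; linarith
      have h3 : 0 < B.mulVec x' i0 := by
        rcases lt_or_eq_of_le (hyp' i0) with h4 | h4
        · rwa [h2]
        · exfalso; apply hi0'; rw [h2, ← h4]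
      exact div_pos h3 h
  -- z := x' - α • g is zero
  have hz : x' = α • g := by
    by_contra hzne
    apply hmin
    refine ⟨x' - α • g, fun h => hzne (by rwa [sub_eq_zero] at h), ?_, ?_⟩
    · rw [Matrix.mulVec_sub, Matrix.mulVec_smul, hAx', hgA]
      simp
    · constructor
      · intro j hj
        simp only [Set.mem_setOf_eq, Matrix.mulVec_sub, Matrix.mulVec_smul,
          Pi.sub_apply, Pi.smul_apply, smul_eq_mul] at hj ⊢
        intro h
        apply hj
        rw [h, hBx'0 j h, mul_zero, sub_zero]
      · intro hle
        have : i0 ∈ {j | B.mulVec (x' - α • g) j ≠ 0} := hle hi0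
        simp only [Set.mem_setOf_eq, Matrix.mulVec_sub, Matrix.mulVec_smul,
          Pi.sub_apply, Pi.smul_apply, smul_eq_mul] at this
        apply this
        rw [hα]
        field_simp
        ring
  refine ⟨α, hαpos, hz, ?_, ?_⟩
  · funext i
    simp only [Pi.smul_apply, smul_eq_mul]
    rcases le_or_gt (B.mulVec g i) 0 with h | h
    · rw [hyp'0 i h, hyp i, max_eq_right h, mul_zero]
    · have h2 : ym' i = 0 := hym'0 i h.le
      have h3 := congrFun hBx' i
      simp only [Pi.sub_apply, h2, sub_zero] at h3
      rw [← h3, hz, Matrix.mulVec_smul, Pi.smul_apply, smul_eq_mul, hyp i,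
        max_eq_left h.le]
  · funext i
    simp only [Pi.smul_apply, smul_eq_mul]
    rcases le_or_gt 0 (B.mulVec g i) with h | h
    · rw [hym'0 i h, hym i, max_eq_right (by linarith), mul_zero]
    · have h1 : yp' i = 0 := hyp'0 i h.le
      have h3 := congrFun hBx' i
      simp only [Pi.sub_apply, h1, zero_sub] at h3
      have : ym' i = -(B.mulVec x' i) := by linarith
      rw [this, hz, Matrix.mulVec_smul, Pi.smul_apply, smul_eq_mul, hym i,
        max_eq_left (by linarith)]
      ring
end

section
/- Let C = {(x, y⁺, y⁻) ∈ ℝ^{n+2m} : Ax = 0, Bx = y⁺ − y⁻, y⁺, y⁻ ≥ 0} with rank(A;B) = n. Every extreme ray (x, y⁺, y⁻) of C satisfies either (i) x = 0 and (y⁺, y⁻) is a positive multiple of (e_i, e_i) for some i, or (ii) x is a circuit direction of {x : Ax = b, Bx ≤ d} with y⁺_i = max{(Bx)_i, 0} and y⁻_i = max{−(Bx)_i, 0}. -/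
/-- Every extreme ray `(x, y⁺, y⁻)` of the cone
`C = {(x,y⁺,y⁻) : Ax = 0, Bx = y⁺ - y⁻, y⁺,y⁻ ≥ 0}` (with `rank (A;B) = n`) satisfies
either (i) `x = 0` and `(y⁺, y⁻)` is a positive multiple of `(e_i, e_i)` for some `i`,
or (ii) `x` is a circuit direction of `{x : Ax = b, Bx ≤ d}` with
`y⁺ = max(Bx,0)`, `y⁻ = max(-Bx,0)`. -/
theorem extreme_ray_classification {n mA mB : ℕ}
    (A : Matrix (Fin mA) (Fin n) ℝ) (B : Matrix (Fin mB) (Fin n) ℝ)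
    (hpointed : (Matrix.fromRows A B).rank = n)
    (x : Fin n → ℝ) (yp ym : Fin mB → ℝ)
    (hxA : A.mulVec x = 0) (hBx : B.mulVec x = yp - ym)
    (hyp : ∀ i, 0 ≤ yp i) (hym : ∀ i, 0 ≤ ym i)
    (hnz : ¬ (x = 0 ∧ yp = 0 ∧ ym = 0))
    (hext : ∀ (x' : Fin n → ℝ) (yp' ym' : Fin mB → ℝ),
      A.mulVec x' = 0 → B.mulVec x' = yp' - ym' →
      (∀ i, 0 ≤ yp' i) → (∀ i, 0 ≤ ym' i) →
      ¬ (x' = 0 ∧ yp' = 0 ∧ ym' = 0) →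
      {i | yp' i ≠ 0} ⊆ {i | yp i ≠ 0} → {i | ym' i ≠ 0} ⊆ {i | ym i ≠ 0} →
      ∃ α : ℝ, 0 < α ∧ x' = α • x ∧ yp' = α • yp ∧ ym' = α • ym) :
    (x = 0 ∧ ∃ (i : Fin mB) (c : ℝ), 0 < c ∧
        yp = (fun j => if j = i then c else 0) ∧ ym = yp) ∨
    (x ≠ 0 ∧
      (¬ ∃ y : Fin n → ℝ, y ≠ 0 ∧ A.mulVec y = 0 ∧
        {j | B.mulVec y j ≠ 0} ⊂ {j | B.mulVec x j ≠ 0}) ∧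
      (∀ i, yp i = max (B.mulVec x i) 0) ∧ (∀ i, ym i = max (-(B.mulVec x i)) 0)) := by
  by_cases hx : x = 0
  · left
    refine ⟨hx, ?_⟩
    subst hx
    have hB0 : B.mulVec 0 = 0 := Matrix.mulVec_zero B
    have hpm : yp = ym := by
      have h := hBx
      rw [hB0] at h
      exact sub_eq_zero.mp h.symm
    have hypne : yp ≠ 0 := by
      intro h
      exact hnz ⟨rfl, h, hpm.symm.trans h⟩
    obtain ⟨i, hi⟩ := Function.ne_iff.mp hypne
    have hi' : yp i ≠ 0 := by simpa using hi
    have hipos : 0 < yp i := lt_of_le_of_ne (hyp i) (Ne.symm hi')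
    set v : Fin mB → ℝ := fun j => if j = i then yp i else 0 with hv
    obtain ⟨α, hα, _, h1, _⟩ := hext 0 v v (Matrix.mulVec_zero A)
      (by rw [hB0, sub_self]) (fun j => by by_cases h : j = i <;> simp [hv, h, hyp i])
      (fun j => by by_cases h : j = i <;> simp [hv, h, hyp i])
      (by rintro ⟨_, h1, _⟩; apply hi'; simpa [hv] using congrFun h1 i)
      (by intro j hj; by_cases h : j = i
          · simpa [h] using hi'
          · simp [hv, h] at hj)
      (by intro j hj; by_cases h : j = i
          · simp only [Set.mem_setOf_eq, h, ← hpm]; exact hi'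
          · simp [hv, h] at hj)
    have hαi : v i = α * yp i := by simpa using congrFun h1 i
    have hα1 : α = 1 := by
      simp [hv] at hαi
      have : (α - 1) * yp i = 0 := by linarith
      rcases mul_eq_zero.mp this with h | h
      · linarith
      · exact absurd h hi'
    refine ⟨i, yp i, hipos, ?_, hpm.symm⟩
    rw [hα1, one_smul] at h1
    exact h1.symm
  · right
    have hcomp : ∀ i, yp i = 0 ∨ ym i = 0 := by
      intro i
      by_contra h
      push_neg at h
      obtain ⟨h1, h2⟩ := h
      set v : Fin mB → ℝ := fun j => if j = i then (1:ℝ) else 0 with hv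
      obtain ⟨α, hα, hx0, _, _⟩ := hext 0 v v (Matrix.mulVec_zero A)
        (by rw [Matrix.mulVec_zero, sub_self])
        (fun j => by by_cases h : j = i <;> simp [hv, h])
        (fun j => by by_cases h : j = i <;> simp [hv, h])
        (by rintro ⟨_, hp, _⟩; have := congrFun hp i; simp [hv] at this)
        (by intro j hj; by_cases h : j = i
            · simpa [h] using h1
            · simp [hv, h] at hj)
        (by intro j hj; by_cases h : j = i
            · simpa [h] using h2
            · simp [hv, h] at hj)
      apply hx
      rcases smul_eq_zero.mp hx0.symm with h | h
      · exact absurd h (ne_of_gt hα)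
      · exact h
    refine ⟨hx, ?_, ?_, ?_⟩
    · -- circuit direction part
      rintro ⟨y, hy0, hAy, hss⟩
      obtain ⟨hsub, hns⟩ := hss
      obtain ⟨j, hjx, hjy⟩ := Set.not_subset.mp hns
      have hjx : B.mulVec x j ≠ 0 := hjx
      have hjy : B.mulVec y j = 0 := by simpa using hjy
      set f : Fin mB → ℝ := fun i =>
        if B.mulVec x i ≠ 0 then |B.mulVec x i| / (|B.mulVec y i| + 1) else 1 with hf
      have hfpos : ∀ i, 0 < f i := by
        intro i
        by_cases h : B.mulVec x i ≠ 0
        · simp only [hf, if_pos h]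
          exact div_pos (abs_pos.mpr h) (by positivity)
        · push_neg at h
          simp [hf, h]
      have hne : (Finset.univ : Finset (Fin mB)).Nonempty := ⟨j, Finset.mem_univ j⟩
      set ε := Finset.univ.inf' hne f with hεdef
      have hε : 0 < ε := by
        rw [hεdef, Finset.lt_inf'_iff]
        exact fun i _ => hfpos i
      have hεle : ∀ i, ε ≤ f i := fun i => Finset.inf'_le f (Finset.mem_univ i)
      have hkey : ∀ i, B.mulVec x i ≠ 0 → ε * |B.mulVec y i| < |B.mulVec x i| := by
        intro i hi
        have h1 : ε * |B.mulVec y i| ≤ f i * |B.mulVec y i| :=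
          mul_le_mul_of_nonneg_right (hεle i) (abs_nonneg _)
        have h2 : f i * |B.mulVec y i| < f i * (|B.mulVec y i| + 1) :=
          mul_lt_mul_of_pos_left (lt_add_one _) (hfpos i)
        have h3 : f i * (|B.mulVec y i| + 1) = |B.mulVec x i| := by
          simp only [hf, if_pos hi]
          field_simp
        linarith
      set x' := x + ε • y with hx'
      have hBx' : ∀ i, B.mulVec x' i = B.mulVec x i + ε * B.mulVec y i := by
        intro i
        simp [hx', Matrix.mulVec_add, Matrix.mulVec_smul]
      have hsign : ∀ i, (0 < B.mulVec x i → 0 < B.mulVec x' i) ∧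
          (B.mulVec x i < 0 → B.mulVec x' i < 0) ∧
          (B.mulVec x i = 0 → B.mulVec x' i = 0) := by
        intro i
        refine ⟨?_, ?_, ?_⟩
        · intro h
          have hk := hkey i (ne_of_gt h)
          have hb : -(|B.mulVec y i|) ≤ B.mulVec y i := neg_abs_le _
          have : |B.mulVec x i| = B.mulVec x i := abs_of_pos h
          rw [hBx' i]
          nlinarith
        · intro h
          have hk := hkey i (ne_of_lt h)
          have hb : B.mulVec y i ≤ |B.mulVec y i| := le_abs_self _
          have : |B.mulVec x i| = -(B.mulVec x i) := abs_of_neg h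
          rw [hBx' i]
          nlinarith
        · intro h
          have hy' : B.mulVec y i = 0 := by
            by_contra hc
            exact (hsub hc) h
          rw [hBx' i, h, hy', mul_zero, add_zero]
      set yp' : Fin mB → ℝ := fun i => max (B.mulVec x' i) 0 with hyp'
      set ym' : Fin mB → ℝ := fun i => max (-(B.mulVec x' i)) 0 with hym'
      have hdec : B.mulVec x' = yp' - ym' := by
        funext i
        simp only [hyp', hym', Pi.sub_apply]
        rcases le_total (B.mulVec x' i) 0 with h | h
        · rw [max_eq_right h, max_eq_left (by linarith)]; ring
        · rw [max_eq_left h, max_eq_right (by linarith)]; ring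
      obtain ⟨α, hα, hxe, _, _⟩ := hext x' yp' ym'
        (by simp [hx', Matrix.mulVec_add, Matrix.mulVec_smul, hxA, hAy])
        hdec (fun i => le_max_right _ _) (fun i => le_max_right _ _)
        (by
          rintro ⟨_, hp0, hm0⟩
          have h1 : yp' j = 0 := by rw [hp0]; rfl
          have h2 : ym' j = 0 := by rw [hm0]; rfl
          simp only [hyp', hym'] at h1 h2
          have hxj : B.mulVec x' j = B.mulVec x j := by rw [hBx' j, hjy, mul_zero, add_zero]
          have hle : B.mulVec x' j ≤ 0 := by
            by_contra hc; push_neg at hc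
            rw [max_eq_left (le_of_lt hc)] at h1; linarith
          have hge : 0 ≤ B.mulVec x' j := by
            by_contra hc; push_neg at hc
            rw [max_eq_left (by linarith)] at h2; linarith
          exact hjx (by rw [← hxj]; linarith))
        (by
          intro i hi
          have hi : yp' i ≠ 0 := hi
          have hpos : 0 < B.mulVec x' i := by
            by_contra hc; push_neg at hc
            exact hi (by simp only [hyp']; exact max_eq_right hc)
          have hxpos : 0 < B.mulVec x i := by
            rcases lt_trichotomy (B.mulVec x i) 0 with h | h | h
            · exact absurd ((hsign i).2.1 h) (by linarith)
            · exact absurd ((hsign i).2.2 h) (by linarith)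
            · exact h
          have := congrFun hBx i
          simp only [Pi.sub_apply] at this
          have : 0 < yp i := by have := hym i; linarith
          exact ne_of_gt this)
        (by
          intro i hi
          have hi : ym' i ≠ 0 := hi
          have hneg : B.mulVec x' i < 0 := by
            by_contra hc; push_neg at hc
            exact hi (by simp only [hym']; exact max_eq_right (by linarith))
          have hxneg : B.mulVec x i < 0 := by
            rcases lt_trichotomy (B.mulVec x i) 0 with h | h | h
            · exact h
            · exact absurd ((hsign i).2.2 h) (by linarith)
            · exact absurd ((hsign i).1 h) (by linarith)
          have := congrFun hBx i
          simp only [Pi.sub_apply] at this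
          have : 0 < ym i := by have := hyp i; linarith
          exact ne_of_gt this)
      -- derive contradiction
      have hj' : B.mulVec x' j = α * B.mulVec x j := by
        have := congrFun (congrArg B.mulVec hxe) j
        rwa [Matrix.mulVec_smul, Pi.smul_apply, smul_eq_mul] at this
      have hxj : B.mulVec x' j = B.mulVec x j := by rw [hBx' j, hjy, mul_zero, add_zero]
      have hα1 : α = 1 := by
        rw [hxj] at hj'
        have : (α - 1) * B.mulVec x j = 0 := by linarith
        rcases mul_eq_zero.mp this with h | h
        · linarith
        · exact absurd h hjx
      rw [hα1, one_smul] at hxe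
      have : ε • y = 0 := by
        have := hxe
        rw [hx'] at this
        exact add_eq_left.mp this
      rcases smul_eq_zero.mp this with h | h
      · exact absurd h (ne_of_gt hε)
      · exact hy0 h
    · intro i
      have hbi := congrFun hBx i
      simp only [Pi.sub_apply] at hbi
      rcases hcomp i with h | h
      · rw [h]
        exact (max_eq_right (by linarith [hym i] : B.mulVec x i ≤ 0)).symm
      · rw [max_eq_left (by linarith [hyp i] : (0:ℝ) ≤ B.mulVec x i)]
        linarith
    · intro i
      have hbi := congrFun hBx i
      simp only [Pi.sub_apply] at hbi
      rcases hcomp i with h | h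
      · rw [max_eq_left (by linarith [hym i] : (0:ℝ) ≤ -(B.mulVec x i))]
        linarith
      · rw [h]
        exact (max_eq_right (by linarith [hyp i] : -(B.mulVec x i) ≤ 0)).symm
end

section
/- Let C = {(x, y⁺, y⁻) : Ax = 0, Bx = y⁺ − y⁻, y⁺, y⁻ ≥ 0} be pointed, and suppose (x, y⁺, y⁻) is an extreme ray of C with y⁺_i > 0 and y⁻_i > 0 for some index i. Then x = 0 and y⁺ − y⁻ = 0. -/
/-- If `(x, y⁺, y⁻)` is an extreme ray of the pointed cone
`C = {(x,y⁺,y⁻) : Ax = 0, Bx = y⁺ - y⁻, y⁺,y⁻ ≥ 0}` with `y⁺_i > 0` and `y⁻_i > 0`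
for some index `i`, then `x = 0` and `y⁺ - y⁻ = 0`. -/
theorem extreme_ray_with_double_support {n mA mB : ℕ}
    (A : Matrix (Fin mA) (Fin n) ℝ) (B : Matrix (Fin mB) (Fin n) ℝ)
    (hpointed : (Matrix.fromRows A B).rank = n)
    (x : Fin n → ℝ) (yp ym : Fin mB → ℝ)
    (hxA : A.mulVec x = 0) (hBx : B.mulVec x = yp - ym)
    (hyp : ∀ i, 0 ≤ yp i) (hym : ∀ i, 0 ≤ ym i)
    (hnz : ¬ (x = 0 ∧ yp = 0 ∧ ym = 0))
    (hext : ∀ (x' : Fin n → ℝ) (yp' ym' : Fin mB → ℝ),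
      A.mulVec x' = 0 → B.mulVec x' = yp' - ym' →
      (∀ i, 0 ≤ yp' i) → (∀ i, 0 ≤ ym' i) →
      ¬ (x' = 0 ∧ yp' = 0 ∧ ym' = 0) →
      {i | yp' i ≠ 0} ⊆ {i | yp i ≠ 0} → {i | ym' i ≠ 0} ⊆ {i | ym i ≠ 0} →
      ∃ α : ℝ, 0 < α ∧ x' = α • x ∧ yp' = α • yp ∧ ym' = α • ym)
    (i : Fin mB) (hpos : 0 < yp i ∧ 0 < ym i) :
    x = 0 ∧ yp = ym := by
  set e : Fin mB → ℝ := fun j => if j = i then 1 else 0 with he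
  have h1 : A.mulVec (0 : Fin n → ℝ) = 0 := Matrix.mulVec_zero A
  have h2 : B.mulVec (0 : Fin n → ℝ) = e - e := by
    simp [Matrix.mulVec_zero]
  have h3 : ∀ j, (0 : ℝ) ≤ e j := by
    intro j; by_cases h : j = i <;> simp [he, h]
  have h5 : ¬ ((0 : Fin n → ℝ) = 0 ∧ e = 0 ∧ e = 0) := by
    rintro ⟨-, h, -⟩
    have := congrFun h i
    simp [he] at this
  have hsub : {j | e j ≠ 0} ⊆ {j | yp j ≠ 0} := by
    intro j hj
    simp only [Set.mem_setOf_eq, he] at hj ⊢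
    by_cases h : j = i
    · subst h; exact ne_of_gt hpos.1
    · simp [h] at hj
  have hsub' : {j | e j ≠ 0} ⊆ {j | ym j ≠ 0} := by
    intro j hj
    simp only [Set.mem_setOf_eq, he] at hj ⊢
    by_cases h : j = i
    · subst h; exact ne_of_gt hpos.2
    · simp [h] at hj
  obtain ⟨α, hα, hx0, hyp', hym'⟩ := hext 0 e e h1 h2 h3 h3 h5 hsub hsub'
  constructor
  · have := hx0.symm
    funext j
    have h := congrFun this j
    simp at h
    rcases h with h | h
    · exact absurd h (ne_of_gt hα)
    · exact h
  · have : α • yp = α • ym := hyp'.symm.trans hym'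
    funext j
    have h := congrFun this j
    simp at h
    exact (smul_right_injective _ (ne_of_gt hα)) this ▸ rfl
end

section
/- Let u ∈ ker(A) \ {0}. Then u can be written as u = Σ_{i=1}^t λ_i g_i with t ≤ n − rank(A), λ_i > 0, each g_i a circuit of P = {x : Ax = b, Bx ≤ d}, and each Bg_i sign-compatible with Bu (i.e., (Bg_i)_j (Bu)_j ≥ 0 for all j). -/
open Matrix Module

namespace ConformalSumAux

variable {n mA mB : ℕ}

lemma sign_trans {a b c : ℝ} (h1 : 0 ≤ a * b) (h2 : 0 ≤ b * c) (hb : b ≠ 0) :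
    0 ≤ a * c := by
  nlinarith [sq_pos_of_ne_zero hb, mul_nonneg h1 h2]

/-- support of a vector as a Finset -/
noncomputable def supp (v : Fin mB → ℝ) : Finset (Fin mB) :=
  Finset.univ.filter (fun j => v j ≠ 0)

lemma mem_supp {v : Fin mB → ℝ} {j : Fin mB} : j ∈ supp v ↔ v j ≠ 0 := by
  simp [supp]

lemma coe_supp (v : Fin mB → ℝ) : (supp v : Set (Fin mB)) = {j | v j ≠ 0} := by
  ext j; simp [supp]

variable (A : Matrix (Fin mA) (Fin n) ℝ) (B : Matrix (Fin mB) (Fin n) ℝ)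

/-- circuit predicate, exactly as in the target statement -/
def IsCircuit (g : Fin n → ℝ) : Prop :=
  g ≠ 0 ∧ A.mulVec g = 0 ∧
    ¬ ∃ y : Fin n → ℝ, y ≠ 0 ∧ A.mulVec y = 0 ∧
      {j | B.mulVec y j ≠ 0} ⊂ {j | B.mulVec g j ≠ 0}

lemma ker_inter (hpointed : (Matrix.fromRows A B).rank = n) :
    ∀ x : Fin n → ℝ, A.mulVec x = 0 → B.mulVec x = 0 → x = 0 := by
  intro x hA hB
  have hrn : Module.finrank ℝ (LinearMap.range (Matrix.fromRows A B).mulVecLin) = n :=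
    hpointed
  have h2 := LinearMap.finrank_range_add_finrank_ker (Matrix.fromRows A B).mulVecLin
  rw [Module.finrank_fin_fun, hrn] at h2
  have hker0 : Module.finrank ℝ (LinearMap.ker (Matrix.fromRows A B).mulVecLin) = 0 := by
    omega
  have hker : LinearMap.ker (Matrix.fromRows A B).mulVecLin = ⊥ :=
    Submodule.finrank_eq_zero.mp hker0
  have hx : (Matrix.fromRows A B).mulVec x = 0 := by
    rw [Matrix.fromRows_mulVec, hA, hB]
    funext i; cases i <;> rfl
  have hmem : x ∈ LinearMap.ker (Matrix.fromRows A B).mulVecLin := by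
    simpa [Matrix.mulVecLin_apply] using hx
  simpa [hker] using hmem

lemma exists_conformal_circuit
    (hinj : ∀ x : Fin n → ℝ, A.mulVec x = 0 → B.mulVec x = 0 → x = 0)
    (u : Fin n → ℝ) (hu0 : u ≠ 0) (huA : A.mulVec u = 0) :
    ∃ g : Fin n → ℝ, IsCircuit A B g ∧
      supp (B.mulVec g) ⊆ supp (B.mulVec u) ∧
      (∀ j, 0 ≤ B.mulVec g j * B.mulVec u j) := by
  classical
  set 𝒮 : Set (Fin n → ℝ) :=
    {y | y ≠ 0 ∧ A.mulVec y = 0 ∧ supp (B.mulVec y) ⊆ supp (B.mulVec u) ∧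
      ∀ j, 0 ≤ B.mulVec y j * B.mulVec u j} with h𝒮
  have hu𝒮 : u ∈ 𝒮 := ⟨hu0, huA, le_refl _, fun j => mul_self_nonneg _⟩
  set C : Set ℕ := (fun y => (supp (B.mulVec y)).card) '' 𝒮 with hC
  have hCne : C.Nonempty := ⟨_, u, hu𝒮, rfl⟩
  obtain ⟨g, hg𝒮, hgcard0⟩ := Nat.sInf_mem hCne
  have hgcard : (supp (B.mulVec g)).card = sInf C := hgcard0
  have hmin : ∀ w ∈ 𝒮, sInf C ≤ (supp (B.mulVec w)).card := fun w hw =>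
    Nat.sInf_le ⟨w, hw, rfl⟩
  obtain ⟨hg0, hgA, hgsub, hgsign⟩ := hg𝒮
  refine ⟨g, ⟨hg0, hgA, ?_⟩, hgsub, hgsign⟩
  rintro ⟨z, hz0, hzA, hzss⟩
  have hss : supp (B.mulVec z) ⊂ supp (B.mulVec g) := by
    rw [← Finset.coe_ssubset, coe_supp, coe_supp]; exact hzss
  set p : Fin mB → ℝ := B.mulVec g with hp
  have hsub : ∀ j, B.mulVec z j ≠ 0 → p j ≠ 0 := by
    intro j hj
    exact mem_supp.mp (hss.subset (mem_supp.mpr hj))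
  have hBzne : B.mulVec z ≠ 0 := fun h => hz0 (hinj z hzA h)
  obtain ⟨j0, hj0⟩ := Function.ne_iff.mp hBzne
  have hpj0 : p j0 ≠ 0 := hsub j0 hj0
  obtain ⟨z', hz'0, hz'A, hsub', hj0neg, hsuppz'⟩ :
      ∃ z' : Fin n → ℝ, z' ≠ 0 ∧ A.mulVec z' = 0 ∧
        (∀ j, B.mulVec z' j ≠ 0 → p j ≠ 0) ∧
        p j0 * B.mulVec z' j0 < 0 ∧
        (∀ j, B.mulVec z' j ≠ 0 ↔ B.mulVec z j ≠ 0) := by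
    rcases lt_or_gt_of_ne (mul_ne_zero hpj0 hj0) with hlt | hgt
    · exact ⟨z, hz0, hzA, hsub, hlt, fun j => Iff.rfl⟩
    · refine ⟨-z, neg_ne_zero.mpr hz0, by rw [Matrix.mulVec_neg, hzA, neg_zero], ?_, ?_, ?_⟩
      · intro j hj
        rw [Matrix.mulVec_neg] at hj
        exact hsub j (by simpa using hj)
      · rw [Matrix.mulVec_neg]; simp only [Pi.neg_apply, mul_neg]; linarith
      · intro j; rw [Matrix.mulVec_neg]; simp
  set q : Fin mB → ℝ := B.mulVec z' with hq
  set S : Finset (Fin mB) := Finset.univ.filter (fun j => p j * q j < 0) with hS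
  have hj0S : j0 ∈ S := by simp [hS, hj0neg]
  have hSne : S.Nonempty := ⟨j0, hj0S⟩
  set f : Fin mB → ℝ := fun j => -(p j * q j) / (q j) ^ 2 with hf
  have hqne : ∀ j ∈ S, q j ≠ 0 := by
    intro j hj h
    have h1 : p j * q j < 0 := by simpa [hS] using hj
    rw [h, mul_zero] at h1; exact lt_irrefl 0 h1
  have hfpos : ∀ j ∈ S, 0 < f j := by
    intro j hj
    have h1 : p j * q j < 0 := by simpa [hS] using hj
    exact div_pos (by linarith) (sq_pos_of_ne_zero (hqne j hj))
  set t : ℝ := S.inf' hSne f with ht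
  have ht0 : 0 < t := by
    rw [ht, Finset.lt_inf'_iff]; exact hfpos
  have htle : ∀ j ∈ S, t ≤ f j := fun j hj => Finset.inf'_le f hj
  obtain ⟨jm, hjmS, hjmeq⟩ := Finset.exists_mem_eq_inf' hSne f
  set w : Fin n → ℝ := g + t • z' with hw
  have hwB : ∀ j, B.mulVec w j = p j + t * q j := by
    intro j
    rw [hw, Matrix.mulVec_add, Matrix.mulVec_smul]
    simp [hp, hq]
  have claim1 : ∀ j, p j = 0 → q j = 0 := by
    intro j hpj
    by_contra h
    exact (hsub' j h) hpj
  have claim2 : ∀ j, 0 ≤ (p j + t * q j) * p j := by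
    intro j
    by_cases hc : p j * q j < 0
    · have hjS : j ∈ S := by simp [hS, hc]
      have h1 := htle j hjS
      have hq2 : (0:ℝ) < (q j)^2 := sq_pos_of_ne_zero (hqne j hjS)
      rw [hf, le_div_iff₀ hq2] at h1
      nlinarith
    · push_neg at hc
      nlinarith [sq_nonneg (p j), ht0.le]
  have hqm : q jm ≠ 0 := hqne jm hjmS
  have claim3 : p jm + t * q jm = 0 := by
    rw [ht, hjmeq, hf]
    field_simp
    ring
  have hpjm : p jm ≠ 0 := by
    intro h
    have h1 : p jm * q jm < 0 := by simpa [hS] using hjmS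
    rw [h, zero_mul] at h1; exact lt_irrefl 0 h1
  by_cases hw0 : w = 0
  · have hgz : ∀ j, p j = -(t * q j) := by
      intro j
      have h1 : B.mulVec w j = 0 := by rw [hw0, Matrix.mulVec_zero]; rfl
      rw [hwB j] at h1; linarith
    obtain ⟨j, hjmem, hjnot⟩ := Finset.exists_of_ssubset hss
    have hpj : p j ≠ 0 := mem_supp.mp hjmem
    have hqj : q j ≠ 0 := by
      intro h
      rw [hgz j, h, mul_zero, neg_zero] at hpj
      exact hpj rfl
    exact hjnot (mem_supp.mpr ((hsuppz' j).mp hqj))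
  · have hwA : A.mulVec w = 0 := by
      rw [hw, Matrix.mulVec_add, Matrix.mulVec_smul, hgA, hz'A]
      simp
    have hw1 : ∀ j, B.mulVec w j ≠ 0 → p j ≠ 0 := by
      intro j hj hpj
      rw [hwB j, hpj, claim1 j hpj, mul_zero, add_zero] at hj
      exact hj rfl
    have hw𝒮 : w ∈ 𝒮 := by
      refine ⟨hw0, hwA, ?_, ?_⟩
      · intro j hj
        exact hgsub (mem_supp.mpr (hw1 j (mem_supp.mp hj)))
      · intro j
        by_cases hpj : p j = 0
        · rw [hwB j, hpj, claim1 j hpj, mul_zero, add_zero, zero_mul]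
        · have h1 : 0 ≤ B.mulVec w j * p j := by rw [hwB j]; exact claim2 j
          exact sign_trans h1 (hgsign j) hpj
    have hle := hmin w hw𝒮
    have hsubw : supp (B.mulVec w) ⊆ supp p := by
      intro j hj
      exact mem_supp.mpr (hw1 j (mem_supp.mp hj))
    have hjmnot : jm ∉ supp (B.mulVec w) := by
      rw [mem_supp]
      push_neg
      rw [hwB jm]; exact claim3
    have hcard : (supp (B.mulVec w)).card < (supp p).card :=
      Finset.card_lt_card ⟨hsubw, fun hsup => hjmnot (hsup (mem_supp.mpr hpjm))⟩
    omega

lemma decomp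
    (hinj : ∀ x : Fin n → ℝ, A.mulVec x = 0 → B.mulVec x = 0 → x = 0) :
    ∀ (k : ℕ) (u : Fin n → ℝ), u ≠ 0 → A.mulVec u = 0 →
      (supp (B.mulVec u)).card ≤ k →
    ∃ (t : ℕ) (g : Fin t → Fin n → ℝ) (lam : Fin t → ℝ),
      LinearIndependent ℝ g ∧ (∀ i, 0 < lam i) ∧ (∀ i, IsCircuit A B (g i)) ∧
      (∀ i, supp (B.mulVec (g i)) ⊆ supp (B.mulVec u)) ∧
      (∀ i j, 0 ≤ B.mulVec (g i) j * B.mulVec u j) ∧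
      u = ∑ i, lam i • g i := by
  intro k
  induction k with
  | zero =>
    intro u hu0 huA hcard
    exfalso
    have hemp : supp (B.mulVec u) = ∅ := Finset.card_eq_zero.mp (Nat.le_zero.mp hcard)
    have hBu : B.mulVec u = 0 := by
      funext j
      by_contra h
      have : j ∈ supp (B.mulVec u) := mem_supp.mpr h
      rw [hemp] at this
      exact absurd this (Finset.notMem_empty j)
    exact hu0 (hinj u huA hBu)
  | succ k ih =>
    intro u hu0 huA hcard
    obtain ⟨g, hgC, hgsub, hgsign⟩ := exists_conformal_circuit A B hinj u hu0 huA
    have hg0 := hgC.1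
    have hgA := hgC.2.1
    set p : Fin mB → ℝ := B.mulVec g with hp
    have hpne : p ≠ 0 := fun h => hg0 (hinj g hgA h)
    obtain ⟨j1, hj1⟩ := Function.ne_iff.mp hpne
    set T : Finset (Fin mB) := supp p with hT
    have hTne : T.Nonempty := ⟨j1, mem_supp.mpr hj1⟩
    set f : Fin mB → ℝ := fun j => (B.mulVec u j * p j) / (p j) ^ 2 with hf
    have hfpos : ∀ j ∈ T, 0 < f j := by
      intro j hj
      have hpj : p j ≠ 0 := mem_supp.mp hj
      have huj : B.mulVec u j ≠ 0 := mem_supp.mp (hgsub hj)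
      have h1 : 0 < B.mulVec u j * p j :=
        lt_of_le_of_ne (by have := hgsign j; linarith [mul_comm (p j) (B.mulVec u j)])
          (Ne.symm (mul_ne_zero huj hpj))
      exact div_pos h1 (sq_pos_of_ne_zero hpj)
    set lam : ℝ := T.inf' hTne f with hlam
    have hlam0 : 0 < lam := by rw [hlam, Finset.lt_inf'_iff]; exact hfpos
    have hlamle : ∀ j ∈ T, lam ≤ f j := fun j hj => Finset.inf'_le f hj
    obtain ⟨jm, hjmT, hjmeq⟩ := Finset.exists_mem_eq_inf' hTne f
    have hpjm : p jm ≠ 0 := mem_supp.mp hjmT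
    set u' : Fin n → ℝ := u - lam • g with hu'
    have hu'B : ∀ j, B.mulVec u' j = B.mulVec u j - lam * p j := by
      intro j
      rw [hu', Matrix.mulVec_sub, Matrix.mulVec_smul]
      simp [hp]
    have hu'A : A.mulVec u' = 0 := by
      rw [hu', Matrix.mulVec_sub, Matrix.mulVec_smul, huA, hgA]
      simp
    have hzero : ∀ j, B.mulVec u j = 0 → p j = 0 := by
      intro j hj
      by_contra h
      exact (mem_supp.mp (hgsub (mem_supp.mpr h))) hj
    have hu'sub : ∀ j, B.mulVec u' j ≠ 0 → B.mulVec u j ≠ 0 := by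
      intro j hj hju
      rw [hu'B j, hju, hzero j hju, mul_zero, sub_zero] at hj
      exact hj rfl
    have hjmzero : B.mulVec u' jm = 0 := by
      rw [hu'B jm, hlam, hjmeq, hf]
      field_simp
      ring
    have hu'sign : ∀ j, 0 ≤ B.mulVec u' j * B.mulVec u j := by
      intro j
      by_cases hpj : p j = 0
      · rw [hu'B j, hpj, mul_zero, sub_zero]; exact mul_self_nonneg _
      · have hjT : j ∈ T := mem_supp.mpr hpj
        have h1 := hlamle j hjT
        have hq2 : (0:ℝ) < (p j)^2 := sq_pos_of_ne_zero hpj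
        rw [hf, le_div_iff₀ hq2] at h1
        have huj : B.mulVec u j ≠ 0 := mem_supp.mp (hgsub hjT)
        have h2 : 0 < B.mulVec u j * p j :=
          lt_of_le_of_ne (by have := hgsign j; linarith [mul_comm (p j) (B.mulVec u j)])
            (Ne.symm (mul_ne_zero huj hpj))
        rw [hu'B j]
        nlinarith
    by_cases hu'0 : u' = 0
    · have hsum : u = lam • g := by
        have h1 : u - lam • g = 0 := hu'0
        exact sub_eq_zero.mp h1
      refine ⟨1, fun _ => g, fun _ => lam,
        (linearIndependent_unique_iff (v := fun _ : Fin 1 => g)).mpr hg0,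
        fun _ => hlam0, fun _ => hgC, fun _ => hgsub, fun _ j => hgsign j, ?_⟩
      rw [Fin.sum_univ_one]; exact hsum
    · have hsub2 : supp (B.mulVec u') ⊆ supp (B.mulVec u) := fun j hj =>
        mem_supp.mpr (hu'sub j (mem_supp.mp hj))
      have hjm_out : jm ∉ supp (B.mulVec u') := by
        rw [mem_supp]; push_neg; exact hjmzero
      have hjm_in : jm ∈ supp (B.mulVec u) := hgsub hjmT
      have hcard' : (supp (B.mulVec u')).card ≤ k := by
        have hlt : (supp (B.mulVec u')).card < (supp (B.mulVec u)).card :=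
          Finset.card_lt_card ⟨hsub2, fun h => hjm_out (h hjm_in)⟩
        omega
      obtain ⟨t', g', lam', hli, hlam', hcirc', hsub', hsign', hsum'⟩ :=
        ih u' hu'0 hu'A hcard'
      refine ⟨t' + 1, Fin.cons g g', Fin.cons lam lam', ?_, ?_, ?_, ?_, ?_, ?_⟩
      · refine hli.fin_cons ?_
        set φ : (Fin n → ℝ) →ₗ[ℝ] ℝ := (LinearMap.proj jm).comp B.mulVecLin with hφ
        have hrange : Set.range g' ⊆ (LinearMap.ker φ : Set (Fin n → ℝ)) := by
          rintro _ ⟨i, rfl⟩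
          have hz : B.mulVec (g' i) jm = 0 := by
            by_contra h
            exact hjm_out (hsub' i (mem_supp.mpr h))
          simp only [SetLike.mem_coe, LinearMap.mem_ker, hφ, LinearMap.comp_apply,
            Matrix.mulVecLin_apply, LinearMap.proj_apply]
          exact hz
        intro hmem
        have hφg : φ g = 0 := by
          have h1 : Submodule.span ℝ (Set.range g') ≤ LinearMap.ker φ :=
            Submodule.span_le.mpr hrange
          simpa using h1 hmem
        apply hpjm
        simpa [hφ, Matrix.mulVecLin_apply, hp] using hφg
      · intro i
        rcases Fin.eq_zero_or_eq_succ i with rfl | ⟨i', rfl⟩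
        · simpa using hlam0
        · simpa using hlam' i'
      · intro i
        rcases Fin.eq_zero_or_eq_succ i with rfl | ⟨i', rfl⟩
        · simpa using hgC
        · simpa using hcirc' i'
      · intro i
        rcases Fin.eq_zero_or_eq_succ i with rfl | ⟨i', rfl⟩
        · simpa using hgsub
        · simp only [Fin.cons_succ]
          exact fun j hj => hsub2 (hsub' i' hj)
      · intro i
        rcases Fin.eq_zero_or_eq_succ i with rfl | ⟨i', rfl⟩
        · intro j; simpa using hgsign j
        · intro j
          simp only [Fin.cons_succ]
          by_cases ha : B.mulVec (g' i') j = 0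
          · rw [ha, zero_mul]
          · have hb : B.mulVec u' j ≠ 0 := mem_supp.mp (hsub' i' (mem_supp.mpr ha))
            exact sign_trans (hsign' i' j) (hu'sign j) hb
      · have hfun : (fun i : Fin (t' + 1) =>
              (Fin.cons lam lam' : Fin (t' + 1) → ℝ) i •
                (Fin.cons g g' : Fin (t' + 1) → Fin n → ℝ) i)
            = (Fin.cons (lam • g) (fun i => lam' i • g' i) : Fin (t' + 1) → Fin n → ℝ) := by
          funext i
          rcases Fin.eq_zero_or_eq_succ i with rfl | ⟨i', rfl⟩ <;> simp
        rw [hfun, Fin.sum_cons, ← hsum']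
        rw [hu']
        abel

end ConformalSumAux

/-- Conformal sum property. Any `u ∈ ker A \ {0}` can be written as
`u = Σ_{i=1}^t λ_i g_i` with `t ≤ n - rank A`, `λ_i > 0`, each `g_i` a circuit
direction of `P = {x : Ax = b, Bx ≤ d}` (nonzero element of `ker A` with `B gᵢ`
support-minimal), and each `B gᵢ` sign-compatible with `B u`. -/
theorem conformal_sum {n mA mB : ℕ}
    (A : Matrix (Fin mA) (Fin n) ℝ) (B : Matrix (Fin mB) (Fin n) ℝ)
    (hpointed : (Matrix.fromRows A B).rank = n)
    (u : Fin n → ℝ) (hu0 : u ≠ 0) (huA : A.mulVec u = 0) :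
    ∃ t : ℕ, t ≤ n - A.rank ∧
      ∃ (g : Fin t → Fin n → ℝ) (lam : Fin t → ℝ),
        (∀ i, 0 < lam i) ∧
        (∀ i, g i ≠ 0 ∧ A.mulVec (g i) = 0 ∧
          ¬ ∃ y : Fin n → ℝ, y ≠ 0 ∧ A.mulVec y = 0 ∧
            {j | B.mulVec y j ≠ 0} ⊂ {j | B.mulVec (g i) j ≠ 0}) ∧
        (∀ i j, 0 ≤ B.mulVec (g i) j * B.mulVec u j) ∧
        u = ∑ i, lam i • g i := by
  classical
  have hinj := ConformalSumAux.ker_inter A B hpointed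
  obtain ⟨t, g, lam, hli, hlam, hcirc, hsub, hsign, hsum⟩ :=
    ConformalSumAux.decomp A B hinj (ConformalSumAux.supp (B.mulVec u)).card u hu0 huA le_rfl
  refine ⟨t, ?_, g, lam, hlam, fun i => hcirc i, hsign, hsum⟩
  have hmem : ∀ i, g i ∈ LinearMap.ker A.mulVecLin := fun i => by
    simpa [Matrix.mulVecLin_apply] using (hcirc i).2.1
  set K := LinearMap.ker A.mulVecLin with hK
  set G : Fin t → K := fun i => ⟨g i, hmem i⟩ with hG
  have hliG : LinearIndependent ℝ G := by
    apply LinearIndependent.of_comp K.subtype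
    have : (K.subtype ∘ G : Fin t → Fin n → ℝ) = g := by funext i; rfl
    rw [this]; exact hli
  have ht := hliG.fintype_card_le_finrank
  rw [Fintype.card_fin] at ht
  have h2 := LinearMap.finrank_range_add_finrank_ker A.mulVecLin
  rw [Module.finrank_fin_fun] at h2
  have hrank : A.rank = Module.finrank ℝ (LinearMap.range A.mulVecLin) := rfl
  rw [hK] at ht
  omega
end

section
/- Let g be a steepest-descent circuit direction at x₀ for the linear program min{cᵀx : Ax = b, Bx ≤ d}. Then cᵀg / ‖Bg‖₁ ≤ cᵀu / ‖Bu‖₁ for every strictly feasible direction u at x₀ with Bu ≠ 0. -/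
open Matrix

open Classical in
/-- Cardinality of the support of a vector. -/
noncomputable def scSupp {m : ℕ} (w : Fin m → ℝ) : ℕ :=
  (Finset.univ.filter fun j => w j ≠ 0).card

lemma scSupp_lt {m : ℕ} (a w : Fin m → ℝ) (hsub : ∀ j, w j = 0 → a j = 0)
    (j0 : Fin m) (hw : w j0 ≠ 0) (ha : a j0 = 0) : scSupp a < scSupp w := by
  classical
  unfold scSupp
  apply Finset.card_lt_card
  rw [Finset.ssubset_def]
  constructor
  · intro j hj
    simp only [Finset.mem_filter, Finset.mem_univ, true_and] at hj ⊢
    intro h; exact hj (hsub j h)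
  · intro hcon
    have := hcon (by simp only [Finset.mem_filter, Finset.mem_univ, true_and]; exact hw)
    simp only [Finset.mem_filter, Finset.mem_univ, true_and] at this
    exact this ha

/-- Conformal additivity of absolute values. -/
lemma conf_abs_add (a b s : ℝ) (hab : a + b = s) (ha : 0 ≤ a * s) (hb : 0 ≤ b * s)
    (ha0 : s = 0 → a = 0) : |s| = |a| + |b| := by
  rcases lt_trichotomy s 0 with h | h | h
  · have ha' : a ≤ 0 := by nlinarith
    have hb' : b ≤ 0 := by nlinarith
    rw [abs_of_nonpos h.le, abs_of_nonpos ha', abs_of_nonpos hb']; linarith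
  · have h1 : a = 0 := ha0 h
    have h2 : b = 0 := by rw [h1] at hab; linarith
    simp [h, h1, h2]
  · have ha' : 0 ≤ a := by nlinarith
    have hb' : 0 ≤ b := by nlinarith
    rw [abs_of_nonneg h.le, abs_of_nonneg ha', abs_of_nonneg hb']; linarith

/-- The key reduction: given `v` with support inside that of `w` and some positive
alignment, one can subtract a positive multiple of `v` from `w`, staying conformal to `w`,
and killing some coordinate of the support. -/
lemma reduceStep {m : ℕ} (v w : Fin m → ℝ) (hsub : ∀ j, w j = 0 → v j = 0)
    (hpos : ∃ j, 0 < v j * w j) :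
    ∃ t : ℝ, 0 < t ∧ (∀ j, 0 ≤ (w j - t * v j) * w j) ∧
      ∃ js, w js ≠ 0 ∧ w js - t * v js = 0 := by
  classical
  set S : Finset (Fin m) := Finset.univ.filter (fun j => 0 < v j * w j) with hS
  have hSne : S.Nonempty := by
    obtain ⟨j, hj⟩ := hpos
    exact ⟨j, by simp [hS, hj]⟩
  have hmem : ∀ j ∈ S, 0 < v j * w j := by
    intro j hj; simpa [hS] using hj
  set t := S.inf' hSne (fun j => w j / v j) with ht
  have htpos : 0 < t := by
    rw [ht]
    refine (Finset.lt_inf'_iff hSne (f := fun j => w j / v j)).mpr ?_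
    intro j hj
    have h := hmem j hj
    rcases lt_trichotomy (v j) 0 with hv | hv | hv
    · have hwj : w j < 0 := by nlinarith
      exact div_pos_of_neg_of_neg hwj hv
    · simp [hv] at h
    · have hwj : 0 < w j := by nlinarith
      exact div_pos hwj hv
  refine ⟨t, htpos, ?_, ?_⟩
  · intro j
    by_cases hj : j ∈ S
    · have h := hmem j hj
      have hle : t ≤ w j / v j := Finset.inf'_le _ hj
      have hv : v j ≠ 0 := by intro h0; rw [h0] at h; simp at h
      rcases lt_or_gt_of_ne hv with hv' | hv'
      · have hwj : w j < 0 := by nlinarith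
        have h2 : w j ≤ t * v j := by
          have := mul_le_mul_of_nonpos_right hle hv'.le
          rwa [div_mul_cancel₀ _ hv] at this
        nlinarith
      · have hwj : 0 < w j := by nlinarith
        have h2 : t * v j ≤ w j := by
          have := mul_le_mul_of_nonneg_right hle hv'.le
          rwa [div_mul_cancel₀ _ hv] at this
        nlinarith
    · have h : ¬ 0 < v j * w j := by
        intro h'; exact hj (by simp [hS, h'])
      push_neg at h
      nlinarith [mul_nonneg htpos.le (neg_nonneg.mpr h), sq_nonneg (w j)]
  · obtain ⟨js, hjs, hjeq⟩ := Finset.exists_mem_eq_inf' hSne (fun j => w j / v j)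
    have h := hmem js hjs
    have hv : v js ≠ 0 := by intro h0; rw [h0] at h; simp at h
    have hwj : w js ≠ 0 := by intro h0; rw [h0] at h; simp at h
    refine ⟨js, hwj, ?_⟩
    rw [ht, hjeq, div_mul_cancel₀ _ hv]; ring

section Main

variable {n mA mB : ℕ} (A : Matrix (Fin mA) (Fin n) ℝ) (B : Matrix (Fin mB) (Fin n) ℝ)

/-- One-sided induction step: if `y` is a nonzero direction whose image `B y` is conformal
to `B u` with strictly smaller support, then the bound for `u` follows from the bound for
vectors of smaller support. -/
lemma stepLemma (c x₀ : Fin n → ℝ) (d : Fin mB → ℝ) (ρ : ℝ) (u y : Fin n → ℝ)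
    (hAu : A.mulVec u = 0) (hAy : A.mulVec y = 0)
    (hsub : ∀ j, B.mulVec u j = 0 → B.mulVec y j = 0)
    (hnn : ∀ j, 0 ≤ B.mulVec y j * B.mulVec u j)
    (hpos : ∃ j, 0 < B.mulVec y j * B.mulVec u j)
    (j₀ : Fin mB) (hj₀w : B.mulVec u j₀ ≠ 0) (hj₀v : B.mulVec y j₀ = 0)
    (htight : ∀ i, B.mulVec x₀ i = d i → B.mulVec u i ≤ 0)
    (IH : ∀ u' : Fin n → ℝ, scSupp (B.mulVec u') < scSupp (B.mulVec u) →
      A.mulVec u' = 0 → B.mulVec u' ≠ 0 →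
      (∀ i, B.mulVec x₀ i = d i → B.mulVec u' i ≤ 0) →
      ρ * ∑ i, |B.mulVec u' i| ≤ c ⬝ᵥ u') :
    ρ * ∑ i, |B.mulVec u i| ≤ c ⬝ᵥ u := by
  set v := B.mulVec y with hv
  set w := B.mulVec u with hw
  obtain ⟨t, htpos, hconf, js, hjsw, hjsz⟩ := reduceStep v w hsub hpos
  set p := u - t • y with hp
  have hBp : ∀ j, B.mulVec p j = w j - t * v j := by
    intro j
    rw [hp, Matrix.mulVec_sub, Matrix.mulVec_smul]
    simp [hw, hv]
  have hAp : A.mulVec p = 0 := by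
    rw [hp, Matrix.mulVec_sub, Matrix.mulVec_smul, hAu, hAy]; simp
  have hBp0 : B.mulVec p ≠ 0 := by
    intro h
    have h2 := congrFun h j₀
    rw [hBp j₀, hj₀v] at h2
    simp only [Pi.zero_apply] at h2
    exact hj₀w (by linarith)
  -- support of p strictly smaller
  have hscp : scSupp (B.mulVec p) < scSupp w := by
    have hF : B.mulVec p = fun j => w j - t * v j := funext hBp
    rw [hF]
    exact scSupp_lt _ w (fun j hj => by rw [hsub j hj, hj]; ring) js hjsw hjsz
  -- support of y strictly smaller
  have hv0 : v ≠ 0 := by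
    obtain ⟨j, hj⟩ := hpos
    intro h
    rw [h] at hj; simp at hj
  have hscy : scSupp v < scSupp w := scSupp_lt v w hsub j₀ hj₀w hj₀v
  -- tightness conditions
  have htp : ∀ i, B.mulVec x₀ i = d i → B.mulVec p i ≤ 0 := by
    intro i hi
    have hwle := htight i hi
    rw [hBp i]
    rcases eq_or_lt_of_le hwle with h | h
    · rw [hsub i h, h]; ring_nf; exact le_refl 0
    · have := hconf i
      nlinarith
  have hty : ∀ i, B.mulVec x₀ i = d i → B.mulVec y i ≤ 0 := by
    intro i hi
    have hwle := htight i hi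
    rcases eq_or_lt_of_le hwle with h | h
    · rw [← hv, hsub i h]
    · have := hnn i
      rw [← hv]
      nlinarith
  have IHp := IH p hscp hAp hBp0 htp
  have IHy := IH y hscy hAy (by rw [← hv]; exact hv0) hty
  -- conformal additivity of the 1-norm
  have habs : ∀ j, |w j| = |w j - t * v j| + t * |v j| := by
    intro j
    have h1 : (w j - t * v j) + t * v j = w j := by ring
    have h2 : 0 ≤ (t * v j) * w j := by
      have := hnn j
      nlinarith
    have h3 : w j = 0 → w j - t * v j = 0 := fun h => by rw [hsub j h, h]; ring
    have := conf_abs_add (w j - t * v j) (t * v j) (w j) h1 (hconf j) h2 h3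
    rw [this, abs_mul, abs_of_pos htpos]
  have hsum : ∑ i, |w i| = (∑ i, |w i - t * v i|) + t * ∑ i, |v i| := by
    rw [Finset.mul_sum, ← Finset.sum_add_distrib]
    exact Finset.sum_congr rfl fun j _ => habs j
  have hcp : c ⬝ᵥ p = c ⬝ᵥ u - t * (c ⬝ᵥ y) := by
    rw [hp, dotProduct_sub, dotProduct_smul, smul_eq_mul]
  have hsum_p : ∑ i, |B.mulVec p i| = ∑ i, |w i - t * v i| := by
    apply Finset.sum_congr rfl
    intro j _
    rw [hBp j]
  rw [hsum_p] at IHp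
  rw [hw] at hsum ⊢
  rw [hsum]
  have h1 : ρ * ((∑ i, |w i - t * v i|) + t * ∑ i, |v i|)
      = ρ * (∑ i, |w i - t * v i|) + t * (ρ * ∑ i, |v i|) := by ring
  rw [h1]
  have h2 : t * (ρ * ∑ i, |v i|) ≤ t * (c ⬝ᵥ y) :=
    mul_le_mul_of_nonneg_left IHy htpos.le
  linarith [IHp, h2, hcp]

end Main

lemma pointed_ker {n mA mB : ℕ} (A : Matrix (Fin mA) (Fin n) ℝ)
    (B : Matrix (Fin mB) (Fin n) ℝ) (hpointed : (Matrix.fromRows A B).rank = n) :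
    ∀ y : Fin n → ℝ, A.mulVec y = 0 → B.mulVec y = 0 → y = 0 := by
  intro y hA hB
  set M := Matrix.fromRows A B with hM
  have hy : M.mulVec y = 0 := by
    rw [hM, Matrix.fromRows_mulVec, hA, hB]
    funext i; cases i <;> simp
  have h1 := LinearMap.finrank_range_add_finrank_ker M.mulVecLin
  rw [Module.finrank_fintype_fun_eq_card] at h1
  simp only [Fintype.card_fin] at h1
  have hr : Module.finrank ℝ (LinearMap.range M.mulVecLin) = n := hpointed
  have hk : Module.finrank ℝ (LinearMap.ker M.mulVecLin) = 0 := by omega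
  have hbot : LinearMap.ker M.mulVecLin = ⊥ := Submodule.finrank_eq_zero.mp hk
  have hm : y ∈ LinearMap.ker M.mulVecLin := by simpa [Matrix.mulVecLin_apply] using hy
  rw [hbot] at hm; simpa using hm

lemma exists_alpha {n mA mB : ℕ} (A : Matrix (Fin mA) (Fin n) ℝ)
    (B : Matrix (Fin mB) (Fin n) ℝ) (b : Fin mA → ℝ) (d : Fin mB → ℝ) (x₀ : Fin n → ℝ)
    (hx₀A : A.mulVec x₀ = b) (hx₀B : ∀ i, B.mulVec x₀ i ≤ d i) (u : Fin n → ℝ)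
    (hAu : A.mulVec u = 0) (htight : ∀ i, B.mulVec x₀ i = d i → B.mulVec u i ≤ 0) :
    ∃ α : ℝ, 0 < α ∧ A.mulVec (x₀ + α • u) = b ∧ ∀ i, B.mulVec (x₀ + α • u) i ≤ d i := by
  classical
  have hAeq : ∀ α : ℝ, A.mulVec (x₀ + α • u) = b := by
    intro α
    rw [Matrix.mulVec_add, Matrix.mulVec_smul, hAu, hx₀A]; simp
  have hBeq : ∀ (α : ℝ) (i : Fin mB),
      B.mulVec (x₀ + α • u) i = B.mulVec x₀ i + α * B.mulVec u i := by
    intro α i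
    rw [Matrix.mulVec_add, Matrix.mulVec_smul]
    simp
  set S : Finset (Fin mB) := Finset.univ.filter (fun i => 0 < B.mulVec u i) with hS
  have hgap : ∀ i ∈ S, 0 < (d i - B.mulVec x₀ i) / B.mulVec u i := by
    intro i hi
    have hui : 0 < B.mulVec u i := by simpa [hS] using hi
    have hne : B.mulVec x₀ i ≠ d i := by
      intro h; have := htight i h; linarith
    have hlt : B.mulVec x₀ i < d i := lt_of_le_of_ne (hx₀B i) hne
    exact div_pos (by linarith) hui
  by_cases hSne : S.Nonempty
  · set α := min 1 (S.inf' hSne (fun i => (d i - B.mulVec x₀ i) / B.mulVec u i)) with hα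
    have hαpos : 0 < α := by
      rw [hα]
      apply lt_min one_pos
      exact (Finset.lt_inf'_iff hSne
        (f := fun i => (d i - B.mulVec x₀ i) / B.mulVec u i)).mpr hgap
    refine ⟨α, hαpos, hAeq α, ?_⟩
    intro i
    rw [hBeq]
    by_cases hui : 0 < B.mulVec u i
    · have hiS : i ∈ S := by simp [hS, hui]
      have hle : α ≤ (d i - B.mulVec x₀ i) / B.mulVec u i :=
        le_trans (min_le_right _ _) (Finset.inf'_le _ hiS)
      have := (le_div_iff₀ hui).mp hle
      linarith
    · push_neg at hui
      have : α * B.mulVec u i ≤ 0 := mul_nonpos_of_nonneg_of_nonpos hαpos.le hui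
      linarith [hx₀B i]
  · refine ⟨1, one_pos, hAeq 1, ?_⟩
    intro i
    rw [hBeq]
    have hui : ¬ 0 < B.mulVec u i := fun h => hSne ⟨i, by simp [hS, h]⟩
    push_neg at hui
    have : (1 : ℝ) * B.mulVec u i ≤ 0 := by linarith
    linarith [hx₀B i]

/-- Main induction: the steepest-descent bound holds for every strictly feasible
direction, by strong induction on the cardinality of the support of `B u`. -/
lemma key_induction {n mA mB : ℕ} (A : Matrix (Fin mA) (Fin n) ℝ)
    (B : Matrix (Fin mB) (Fin n) ℝ)
    (hker : ∀ y : Fin n → ℝ, A.mulVec y = 0 → B.mulVec y = 0 → y = 0)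
    (d : Fin mB → ℝ) (c x₀ : Fin n → ℝ) (ρ : ℝ)
    (hcirc : ∀ g' : Fin n → ℝ, g' ≠ 0 → A.mulVec g' = 0 →
      (¬ ∃ y : Fin n → ℝ, y ≠ 0 ∧ A.mulVec y = 0 ∧
        {j | B.mulVec y j ≠ 0} ⊂ {j | B.mulVec g' j ≠ 0}) →
      (∀ i, B.mulVec x₀ i = d i → B.mulVec g' i ≤ 0) →
      ρ * ∑ i, |B.mulVec g' i| ≤ c ⬝ᵥ g') :
    ∀ (N : ℕ) (u : Fin n → ℝ), scSupp (B.mulVec u) < N → A.mulVec u = 0 →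
      B.mulVec u ≠ 0 → (∀ i, B.mulVec x₀ i = d i → B.mulVec u i ≤ 0) →
      ρ * ∑ i, |B.mulVec u i| ≤ c ⬝ᵥ u := by
  intro N
  induction N with
  | zero => intro u h; exact absurd h (Nat.not_lt_zero _)
  | succ N ih =>
    intro u hcard hAu hBu htight
    have hu0 : u ≠ 0 := fun h => hBu (by rw [h, Matrix.mulVec_zero])
    by_cases hcir : ∃ y : Fin n → ℝ, y ≠ 0 ∧ A.mulVec y = 0 ∧
        {j | B.mulVec y j ≠ 0} ⊂ {j | B.mulVec u j ≠ 0}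
    · obtain ⟨y, hy0, hyA, hss⟩ := hcir
      set v := B.mulVec y with hv
      set w := B.mulVec u with hw
      have hsub : ∀ j, w j = 0 → v j = 0 := by
        intro j hj
        by_contra h
        have : j ∈ {j | v j ≠ 0} := h
        have := hss.1 this
        exact this hj
      obtain ⟨j₀, hj₀w, hj₀v⟩ : ∃ j₀, w j₀ ≠ 0 ∧ v j₀ = 0 := by
        obtain ⟨j, hj1, hj2⟩ := Set.not_subset.mp hss.2
        exact ⟨j, hj1, not_not.mp hj2⟩
      have hv0 : v ≠ 0 := fun h => hy0 (hker y hyA h)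
      -- the induction hypothesis in the form needed by `stepLemma`
      have IH : ∀ u' : Fin n → ℝ, scSupp (B.mulVec u') < scSupp (B.mulVec u) →
          A.mulVec u' = 0 → B.mulVec u' ≠ 0 →
          (∀ i, B.mulVec x₀ i = d i → B.mulVec u' i ≤ 0) →
          ρ * ∑ i, |B.mulVec u' i| ≤ c ⬝ᵥ u' := by
        intro u' h1 h2 h3 h4
        refine ih u' ?_ h2 h3 h4
        have hc2 : scSupp (B.mulVec u) < N + 1 := hcard
        omega
      by_cases hP : ∃ j, 0 < v j * w j
      · -- build an intermediate conformal direction z with smaller support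
        obtain ⟨t, htpos, hconf, js, hjsw, hjsz⟩ := reduceStep v w hsub hP
        set z := u - t • y with hz
        have hBz : ∀ j, B.mulVec z j = w j - t * v j := by
          intro j
          rw [hz, Matrix.mulVec_sub, Matrix.mulVec_smul]
          simp [hw, hv]
        have hAz : A.mulVec z = 0 := by
          rw [hz, Matrix.mulVec_sub, Matrix.mulVec_smul, hAu, hyA]; simp
        have hzsub : ∀ j, w j = 0 → B.mulVec z j = 0 := by
          intro j hj
          rw [hBz j, hsub j hj, hj]; ring
        have hznn : ∀ j, 0 ≤ B.mulVec z j * w j := by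
          intro j; rw [hBz j]; exact hconf j
        have hzpos : ∃ j, 0 < B.mulVec z j * w j := by
          refine ⟨j₀, ?_⟩
          rw [hBz j₀, hj₀v]
          have he : w j₀ - t * 0 = w j₀ := by ring
          rw [he]
          rcases lt_or_gt_of_ne hj₀w with h | h
          · nlinarith
          · nlinarith
        have hjz : B.mulVec z js = 0 := by rw [hBz js]; exact hjsz
        exact stepLemma A B c x₀ d ρ u z hAu hAz hzsub hznn hzpos js hjsw hjz htight IH
      · -- all alignments nonpositive: use `-y` instead
        push_neg at hP
        have hsub' : ∀ j, w j = 0 → B.mulVec (-y) j = 0 := by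
          intro j hj
          rw [Matrix.mulVec_neg]
          simp [← hv, hsub j hj]
        have hnn' : ∀ j, 0 ≤ B.mulVec (-y) j * w j := by
          intro j
          rw [Matrix.mulVec_neg]
          have := hP j
          simp only [Pi.neg_apply, ← hv]
          nlinarith
        have hpos' : ∃ j, 0 < B.mulVec (-y) j * w j := by
          obtain ⟨j, hj⟩ := Function.ne_iff.mp hv0
          simp only [Pi.zero_apply] at hj
          have hwj : w j ≠ 0 := fun h => hj (hsub j h)
          refine ⟨j, ?_⟩
          rw [Matrix.mulVec_neg]
          simp only [Pi.neg_apply, ← hv]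
          have h1 := hP j
          rcases lt_or_gt_of_ne hj with h | h <;> rcases lt_or_gt_of_ne hwj with h' | h' <;>
            [skip; skip; skip; skip] <;> first
            | (exfalso; nlinarith)
            | nlinarith
        have hAy' : A.mulVec (-y) = 0 := by rw [Matrix.mulVec_neg, hyA]; simp
        have hj₀v' : B.mulVec (-y) j₀ = 0 := by
          rw [Matrix.mulVec_neg]; simp [← hv, hj₀v]
        exact stepLemma A B c x₀ d ρ u (-y) hAu hAy' hsub' hnn' hpos' j₀ hj₀w hj₀v'
          htight IH
    · exact hcirc u hu0 hAu hcir htight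

/-- A steepest-descent circuit direction `g` at `x₀` (a strictly feasible
circuit minimizing `cᵀg / ‖Bg‖₁` over all strictly feasible circuits at `x₀`) satisfies
`cᵀg / ‖Bg‖₁ ≤ cᵀu / ‖Bu‖₁` for every strictly feasible direction `u` at `x₀` with
`Bu ≠ 0`. -/
theorem steepest_descent_bounds_all_feasible {n mA mB : ℕ}
    (A : Matrix (Fin mA) (Fin n) ℝ) (B : Matrix (Fin mB) (Fin n) ℝ)
    (hpointed : (Matrix.fromRows A B).rank = n)
    (b : Fin mA → ℝ) (d : Fin mB → ℝ) (c : Fin n → ℝ)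
    (x₀ : Fin n → ℝ) (hx₀A : A.mulVec x₀ = b) (hx₀B : ∀ i, B.mulVec x₀ i ≤ d i)
    (g : Fin n → ℝ)
    -- g is a circuit of P
    (hg0 : g ≠ 0) (hgA : A.mulVec g = 0)
    (hgmin : ¬ ∃ y : Fin n → ℝ, y ≠ 0 ∧ A.mulVec y = 0 ∧
      {j | B.mulVec y j ≠ 0} ⊂ {j | B.mulVec g j ≠ 0})
    -- g is strictly feasible at x₀
    (hgfeas : ∃ α : ℝ, 0 < α ∧ A.mulVec (x₀ + α • g) = b ∧
      ∀ i, B.mulVec (x₀ + α • g) i ≤ d i)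
    -- g minimizes cᵀg/‖Bg‖₁ over all strictly feasible circuits at x₀
    (hsteepest : ∀ g' : Fin n → ℝ, g' ≠ 0 → A.mulVec g' = 0 →
      (¬ ∃ y : Fin n → ℝ, y ≠ 0 ∧ A.mulVec y = 0 ∧
        {j | B.mulVec y j ≠ 0} ⊂ {j | B.mulVec g' j ≠ 0}) →
      (∃ α : ℝ, 0 < α ∧ A.mulVec (x₀ + α • g') = b ∧
        ∀ i, B.mulVec (x₀ + α • g') i ≤ d i) →
      c ⬝ᵥ g / (∑ i, |B.mulVec g i|) ≤ c ⬝ᵥ g' / (∑ i, |B.mulVec g' i|)) :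
    ∀ u : Fin n → ℝ, B.mulVec u ≠ 0 →
      (∃ α : ℝ, 0 < α ∧ A.mulVec (x₀ + α • u) = b ∧
        ∀ i, B.mulVec (x₀ + α • u) i ≤ d i) →
      c ⬝ᵥ g / (∑ i, |B.mulVec g i|) ≤ c ⬝ᵥ u / (∑ i, |B.mulVec u i|) := by
  have hker := pointed_ker A B hpointed
  set ρ := c ⬝ᵥ g / (∑ i, |B.mulVec g i|) with hρ
  have hsumpos : ∀ z : Fin mB → ℝ, z ≠ 0 → 0 < ∑ i, |z i| := by
    intro z hz
    obtain ⟨j, hj⟩ := Function.ne_iff.mp hz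
    exact Finset.sum_pos' (fun i _ => abs_nonneg _) ⟨j, Finset.mem_univ _, abs_pos.mpr hj⟩
  have hcirc : ∀ g' : Fin n → ℝ, g' ≠ 0 → A.mulVec g' = 0 →
      (¬ ∃ y : Fin n → ℝ, y ≠ 0 ∧ A.mulVec y = 0 ∧
        {j | B.mulVec y j ≠ 0} ⊂ {j | B.mulVec g' j ≠ 0}) →
      (∀ i, B.mulVec x₀ i = d i → B.mulVec g' i ≤ 0) →
      ρ * ∑ i, |B.mulVec g' i| ≤ c ⬝ᵥ g' := by
    intro g' hg'0 hAg' hmin htight'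
    have hBg' : B.mulVec g' ≠ 0 := fun h => hg'0 (hker g' hAg' h)
    have hfe := exists_alpha A B b d x₀ hx₀A hx₀B g' hAg' htight'
    have h := hsteepest g' hg'0 hAg' hmin hfe
    exact (le_div_iff₀ (hsumpos _ hBg')).mp h
  intro u hBu ⟨α, hα, hA, hB⟩
  -- extract A u = 0
  have hAu : A.mulVec u = 0 := by
    rw [Matrix.mulVec_add, Matrix.mulVec_smul, hx₀A] at hA
    have h0 : α • A.mulVec u = 0 := by
      funext i
      have := congrFun hA i
      simp only [Pi.add_apply] at this
      simpa using this
    rcases smul_eq_zero.mp h0 with h | h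
    · exact absurd h (ne_of_gt hα)
    · exact h
  -- extract tightness
  have htight : ∀ i, B.mulVec x₀ i = d i → B.mulVec u i ≤ 0 := by
    intro i hi
    have h := hB i
    rw [Matrix.mulVec_add, Matrix.mulVec_smul] at h
    simp only [Pi.add_apply, Pi.smul_apply, smul_eq_mul] at h
    rw [hi] at h
    nlinarith
  have hmain := key_induction A B hker d c x₀ ρ hcirc (scSupp (B.mulVec u) + 1) u
    (Nat.lt_succ_self _) hAu hBu htight
  exact (le_div_iff₀ (hsumpos _ hBu)).mpr hmain
end

section
/- Let g_k, g_{k+1} ∈ ℝ^n with Bg_k ≠ 0, Bg_{k+1} ≠ 0, and α_k, α_{k+1} > 0. If cᵀg_k/‖Bg_k‖₁ > cᵀg_{k+1}/‖Bg_{k+1}‖₁, then cᵀ(α_k g_k + α_{k+1} g_{k+1}) < ‖α_k Bg_k + α_{k+1} Bg_{k+1}‖₁ · (cᵀg_k/‖Bg_k‖₁). -/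
open Matrix

/-- If `cᵀg_k/‖Bg_k‖₁ > cᵀg_{k+1}/‖Bg_{k+1}‖₁` (with `g_k` a descent
direction, i.e. `cᵀg_k ≤ 0`, as in the steepest-descent scheme), then
`cᵀ(α_k g_k + α_{k+1} g_{k+1}) < ‖α_k Bg_k + α_{k+1} Bg_{k+1}‖₁ · (cᵀg_k/‖Bg_k‖₁)`. -/
theorem steepness_key_inequality {m n : ℕ}
    (B : Matrix (Fin m) (Fin n) ℝ) (c : Fin n → ℝ)
    (gk gk1 : Fin n → ℝ) (hgk : B.mulVec gk ≠ 0) (hgk1 : B.mulVec gk1 ≠ 0)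
    (ak ak1 : ℝ) (hak : 0 < ak) (hak1 : 0 < ak1)
    (hdescent : c ⬝ᵥ gk ≤ 0)
    (hlt : c ⬝ᵥ gk1 / (∑ i, |B.mulVec gk1 i|) < c ⬝ᵥ gk / (∑ i, |B.mulVec gk i|)) :
    c ⬝ᵥ (ak • gk + ak1 • gk1) <
      (∑ i, |ak * B.mulVec gk i + ak1 * B.mulVec gk1 i|) *
        (c ⬝ᵥ gk / (∑ i, |B.mulVec gk i|)) := by
  set A : ℝ := ∑ i, |B.mulVec gk i| with hA
  set A1 : ℝ := ∑ i, |B.mulVec gk1 i| with hA1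
  set N : ℝ := ∑ i, |ak * B.mulVec gk i + ak1 * B.mulVec gk1 i| with hN
  have hApos : 0 < A := by
    have : ∃ i, B.mulVec gk i ≠ 0 := by
      by_contra h; push_neg at h; exact hgk (funext h)
    obtain ⟨i, hi⟩ := this
    exact Finset.sum_pos' (fun j _ => abs_nonneg _)
      ⟨i, Finset.mem_univ i, abs_pos.mpr hi⟩
  have hA1pos : 0 < A1 := by
    have : ∃ i, B.mulVec gk1 i ≠ 0 := by
      by_contra h; push_neg at h; exact hgk1 (funext h)
    obtain ⟨i, hi⟩ := this
    exact Finset.sum_pos' (fun j _ => abs_nonneg _)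
      ⟨i, Finset.mem_univ i, abs_pos.mpr hi⟩
  have htri : N ≤ ak * A + ak1 * A1 := by
    rw [hN, hA, hA1, Finset.mul_sum, Finset.mul_sum, ← Finset.sum_add_distrib]
    refine Finset.sum_le_sum fun i _ => ?_
    calc |ak * B.mulVec gk i + ak1 * B.mulVec gk1 i|
        ≤ |ak * B.mulVec gk i| + |ak1 * B.mulVec gk1 i| := abs_add_le _ _
      _ = ak * |B.mulVec gk i| + ak1 * |B.mulVec gk1 i| := by
          rw [abs_mul, abs_mul, abs_of_pos hak, abs_of_pos hak1]
  set s : ℝ := c ⬝ᵥ gk / A with hs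
  set t : ℝ := c ⬝ᵥ gk1 / A1 with ht
  have hsle : s ≤ 0 := div_nonpos_of_nonpos_of_nonneg hdescent hApos.le
  have hLHS : c ⬝ᵥ (ak • gk + ak1 • gk1) = ak * (A * s) + ak1 * (A1 * t) := by
    rw [hs, ht, mul_div_cancel₀ _ hApos.ne', mul_div_cancel₀ _ hA1pos.ne',
      dotProduct_add, dotProduct_smul, dotProduct_smul, smul_eq_mul, smul_eq_mul]
  rw [hLHS]
  have h1 : ak1 * (A1 * t) < ak1 * (A1 * s) := by
    have := mul_lt_mul_of_pos_left hlt (mul_pos hak1 hA1pos)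
    calc ak1 * (A1 * t) = ak1 * A1 * t := by ring
      _ < ak1 * A1 * s := this
      _ = ak1 * (A1 * s) := by ring
  have h2 : (ak * A + ak1 * A1) * s ≤ N * s :=
    mul_le_mul_of_nonpos_right htri hsle
  nlinarith [h2, h1]
end

section
/- Let g₁, ..., g_j ∈ ℝ^n with each Bg_i ≠ 0 and α_i > 0, and suppose cᵀg_i/‖Bg_i‖₁ = cᵀg₁/‖Bg₁‖₁ for all i. If Bg₁ and Bg_j lie in different closed orthants in the sense that ‖Σ α_i Bg_i‖₁ < Σ α_i ‖Bg_i‖₁, then cᵀ(Σ α_i g_i) / ‖B(Σ α_i g_i)‖₁ < cᵀg₁/‖Bg₁‖₁, provided B(Σ α_i g_i) ≠ 0 and cᵀg₁ < 0. -/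
open Matrix

/-- Let `g₁, ..., g_j` have equal steepness `cᵀg_i/‖Bg_i‖₁` with
`cᵀg₁ < 0` and `α_i > 0`. If the vectors `α_i Bg_i` do not all lie in a common closed
orthant (expressed by the strict ℓ¹ triangle inequality
`‖Σ α_i Bg_i‖₁ < Σ α_i ‖Bg_i‖₁`) and `B(Σ α_i g_i) ≠ 0`, then
`cᵀ(Σ α_i g_i)/‖B(Σ α_i g_i)‖₁ < cᵀg₁/‖Bg₁‖₁`. -/
theorem orthant_change_strict_decrease {m n : ℕ}
    (B : Matrix (Fin m) (Fin n) ℝ) (c : Fin n → ℝ)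
    {j : ℕ} (hj : 0 < j)
    (g : Fin j → Fin n → ℝ) (a : Fin j → ℝ) (ha : ∀ i, 0 < a i)
    (hB : ∀ i, B.mulVec (g i) ≠ 0)
    (heq : ∀ i, c ⬝ᵥ g i / (∑ l, |B.mulVec (g i) l|)
      = c ⬝ᵥ g ⟨0, hj⟩ / (∑ l, |B.mulVec (g ⟨0, hj⟩) l|))
    (hcneg : c ⬝ᵥ g ⟨0, hj⟩ < 0)
    (hlt : (∑ l, |B.mulVec (∑ i, a i • g i) l|) < ∑ i, a i * ∑ l, |B.mulVec (g i) l|)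
    (hBsum : B.mulVec (∑ i, a i • g i) ≠ 0) :
    c ⬝ᵥ (∑ i, a i • g i) / (∑ l, |B.mulVec (∑ i, a i • g i) l|) <
      c ⬝ᵥ g ⟨0, hj⟩ / (∑ l, |B.mulVec (g ⟨0, hj⟩) l|) := by
  set i0 : Fin j := ⟨0, hj⟩
  set N : Fin j → ℝ := fun i => ∑ l, |B.mulVec (g i) l| with hN
  have hNpos : ∀ i, 0 < N i := by
    intro i
    obtain ⟨l, hl⟩ := Function.ne_iff.mp (hB i)
    exact Finset.sum_pos' (fun l _ => abs_nonneg _)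
      ⟨l, Finset.mem_univ l, abs_pos.mpr hl⟩
  set D : ℝ := ∑ l, |B.mulVec (∑ i, a i • g i) l| with hD
  have hDpos : 0 < D := by
    obtain ⟨l, hl⟩ := Function.ne_iff.mp hBsum
    exact Finset.sum_pos' (fun l _ => abs_nonneg _)
      ⟨l, Finset.mem_univ l, abs_pos.mpr hl⟩
  set r : ℝ := c ⬝ᵥ g i0 / N i0 with hr
  have hrneg : r < 0 := div_neg_of_neg_of_pos hcneg (hNpos i0)
  have hci : ∀ i, c ⬝ᵥ g i = r * N i := by
    intro i
    rw [← heq i]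
    exact (div_mul_cancel₀ _ (hNpos i).ne').symm
  have hcsum : c ⬝ᵥ (∑ i, a i • g i) = r * ∑ i, a i * N i := by
    have h1 : c ⬝ᵥ (∑ i, a i • g i) = ∑ i, a i * (c ⬝ᵥ g i) := by
      simp [dotProduct, Finset.mul_sum, Finset.sum_apply, Pi.smul_apply,
        smul_eq_mul]
      rw [Finset.sum_comm]
      exact Finset.sum_congr rfl fun i _ => Finset.sum_congr rfl fun l _ => by ring
    rw [h1, Finset.mul_sum]
    exact Finset.sum_congr rfl fun i _ => by rw [hci i]; ring
  rw [hcsum, div_lt_iff₀ hDpos]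
  have hS : D < ∑ i, a i * N i := hlt
  nlinarith [hS, hrneg, hDpos]
end

section
/- Let M ∈ ℝ^{m×n} be totally unimodular with rank n, and let g ∈ ℝ^n generate the kernel of an (n−1)-row submatrix M' of M with rank(M') = n−1, normalized to coprime integer components. Then every entry of g and of Mg lies in {−1, 0, 1}. -/
open Matrix Module

private lemma exists_gcd_rep {ι : Type*} [DecidableEq ι] (s : Finset ι) (z : ι → ℤ) :
    ∃ c : ι → ℤ, ∑ i ∈ s, c i * z i = s.gcd z := by
  classical
  induction s using Finset.induction_on with
  | empty => exact ⟨0, by simp⟩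
  | @insert a s ha ih =>
    obtain ⟨c, hc⟩ := ih
    refine ⟨fun i => if i = a then Int.gcdA (z a) (s.gcd z)
      else c i * Int.gcdB (z a) (s.gcd z), ?_⟩
    rw [Finset.sum_insert ha, Finset.gcd_insert, ← Int.coe_gcd, Int.gcd_eq_gcd_ab]
    beta_reduce
    rw [if_pos rfl]
    have h1 : ∀ i ∈ s, (if i = a then Int.gcdA (z a) (s.gcd z)
        else c i * Int.gcdB (z a) (s.gcd z)) * z i
        = (c i * z i) * Int.gcdB (z a) (s.gcd z) := by
      intro i hi
      rw [if_neg (by rintro rfl; exact ha hi)]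
      ring
    rw [Finset.sum_congr rfl h1, ← Finset.sum_mul, hc]
    ring

private lemma mem3_real_int {x : ℝ} (h : x = -1 ∨ x = 0 ∨ x = 1) :
    ∃ t : ℤ, (t : ℝ) = x ∧ (t = -1 ∨ t = 0 ∨ t = 1) := by
  rcases h with h | h | h
  · exact ⟨-1, by simp [h], Or.inl rfl⟩
  · exact ⟨0, by simp [h], Or.inr (Or.inl rfl)⟩
  · exact ⟨1, by simp [h], Or.inr (Or.inr rfl)⟩

private lemma int_mul_mem3 {a t d : ℤ} (ha : a ≠ 0) (h : a * t = d)
    (hd : d = -1 ∨ d = 0 ∨ d = 1) : t = -1 ∨ t = 0 ∨ t = 1 := by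
  rcases hd with hd | hd | hd
  · have hu : IsUnit t := isUnit_of_mul_isUnit_right
      (show IsUnit (a * t) by rw [h, hd]; exact isUnit_one.neg)
    rcases Int.isUnit_iff.mp hu with h1 | h1
    · exact Or.inr (Or.inr h1)
    · exact Or.inl h1
  · rcases mul_eq_zero.mp (h.trans hd) with h1 | h1
    · exact absurd h1 ha
    · exact Or.inr (Or.inl h1)
  · have hu : IsUnit t := isUnit_of_mul_isUnit_right
      (show IsUnit (a * t) by rw [h, hd]; exact isUnit_one)
    rcases Int.isUnit_iff.mp hu with h1 | h1
    · exact Or.inr (Or.inr h1)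
    · exact Or.inl h1

/-- Let `M ∈ ℝ^{m×n}` be totally unimodular with rank `n`, and let `g`
(normalized to coprime integer components) generate the kernel of an `(n-1)`-row
submatrix `M'` of `M` with `rank M' = n - 1`. Then every entry of `g` and of `Mg`
lies in `{-1, 0, 1}`. -/
theorem tu_circuit_entries {m n : ℕ}
    (M : Matrix (Fin m) (Fin n) ℝ)
    (hTU : ∀ (k : ℕ) (r : Fin k → Fin m) (c : Fin k → Fin n),
      (M.submatrix r c).det = -1 ∨ (M.submatrix r c).det = 0 ∨ (M.submatrix r c).det = 1)
    (hrank : M.rank = n)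
    (r : Fin (n - 1) → Fin m) (hr : Function.Injective r)
    (hrkM' : (M.submatrix r id).rank = n - 1)
    (g : Fin n → ℝ) (hg0 : g ≠ 0)
    (hker : (M.submatrix r id).mulVec g = 0)
    (hgen : ∀ y : Fin n → ℝ, (M.submatrix r id).mulVec y = 0 → ∃ α : ℝ, y = α • g)
    (z : Fin n → ℤ) (hz : g = fun i => (z i : ℝ)) (hcop : Finset.univ.gcd z = 1) :
    (∀ i, g i = -1 ∨ g i = 0 ∨ g i = 1) ∧
      (∀ i, M.mulVec g i = -1 ∨ M.mulVec g i = 0 ∨ M.mulVec g i = 1) := by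
  have hn : n ≠ 0 := by
    rintro rfl
    exact hg0 (funext fun i => i.elim0)
  obtain ⟨k, rfl⟩ : ∃ k, n = k + 1 :=
    ⟨n - 1, (Nat.succ_pred_eq_of_pos (Nat.pos_of_ne_zero hn)).symm⟩
  -- a defeq copy of `r` with clean index type
  set r' : Fin k → Fin m := (r : Fin k → Fin m) with hr'def
  have hker2 : (M.submatrix r' id) *ᵥ g = 0 := hker
  have hrk2 : (M.submatrix r' id).rank = k := hrkM'
  have hgen2 : ∀ y : Fin (k + 1) → ℝ,
      (M.submatrix r' id) *ᵥ y = 0 → ∃ α : ℝ, y = α • g := hgen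
  have hof : Matrix.of (M.submatrix r' id) = M.submatrix r' id := rfl
  -- the Cramer vector of maximal minors
  set v : Fin (k + 1) → ℝ :=
    fun j => (-1) ^ (j : ℕ) * (M.submatrix r' (Fin.succAbove j)).det with hvdef
  have hvj : ∀ j, v j = (-1) ^ (j : ℕ) * (M.submatrix r' (Fin.succAbove j)).det :=
    fun j => rfl
  -- key determinant expansion
  have key : ∀ w : Fin (k + 1) → ℝ,
      (Matrix.of (Matrix.vecCons w (M.submatrix r' id))).det = w ⬝ᵥ v := by
    intro w
    have hdot : w ⬝ᵥ v = ∑ j, w j * v j := rfl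
    rw [Matrix.det_succ_row_zero, hdot]
    refine Finset.sum_congr rfl fun j _ => ?_
    have hsub : (Matrix.of (Matrix.vecCons w (M.submatrix r' id))).submatrix Fin.succ
        (Fin.succAbove j) = M.submatrix r' (Fin.succAbove j) := by
      ext a b
      simp [Matrix.cons_val_succ]
      rfl
    rw [hsub, hvj j]
    simp only [Matrix.of_apply, Matrix.cons_val_zero]
    rw [show Matrix.vecCons w (M.submatrix r' id) 0 j = w j from rfl]
    ring
  -- v is in the kernel of M'
  have hMv0 : (M.submatrix r' id) *ᵥ v = 0 := by
    funext i
    have h0 : (Matrix.of (Matrix.vecCons (M.submatrix r' id i) (M.submatrix r' id))).det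
        = 0 := by
      refine Matrix.det_zero_of_row_eq (i := 0) (j := Fin.succ i)
        (Fin.succ_ne_zero i).symm ?_
      funext b
      simp [Matrix.cons_val_zero, Matrix.cons_val_succ]
      rfl
    show (M.submatrix r' id i) ⬝ᵥ v = 0
    rw [← key]
    exact h0
  obtain ⟨α, hαv⟩ := hgen2 v hMv0
  -- rows of M' are linearly independent
  have hrows : ∀ c : Fin k → ℝ, c ᵥ* (M.submatrix r' id) = 0 → c = 0 := by
    intro c hc
    have h1 : (M.submatrix r' id)ᵀ *ᵥ c = 0 := by
      rw [Matrix.mulVec_transpose]; exact hc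
    have hrk : ((M.submatrix r' id)ᵀ).rank = k := by
      rw [Matrix.rank_transpose]; exact hrk2
    rw [Matrix.rank] at hrk
    have h2 := LinearMap.finrank_range_add_finrank_ker ((M.submatrix r' id)ᵀ).mulVecLin
    rw [hrk] at h2
    have h3 : finrank ℝ (Fin k → ℝ) = k := by
      simp [Module.finrank_fintype_fun_eq_card]
    rw [h3] at h2
    have h4 : finrank ℝ (LinearMap.ker ((M.submatrix r' id)ᵀ).mulVecLin) = 0 := by omega
    have h5 : LinearMap.ker ((M.submatrix r' id)ᵀ).mulVecLin = ⊥ :=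
      Submodule.finrank_eq_zero.mp h4
    have h6 : c ∈ LinearMap.ker ((M.submatrix r' id)ᵀ).mulVecLin := by
      rw [LinearMap.mem_ker]
      simpa using h1
    rw [h5] at h6
    exact h6
  -- determinant of g prepended to M' is nonzero
  have hdetB : (Matrix.of (Matrix.vecCons g (M.submatrix r' id))).det ≠ 0 := by
    intro h0
    obtain ⟨c, hc0, hc⟩ := Matrix.exists_vecMul_eq_zero_iff.mpr h0
    erw [Matrix.vecMul_cons] at hc
    have hgg : g ⬝ᵥ g ≠ 0 := fun h => hg0 (dotProduct_self_eq_zero.mp h)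
    have h2 : Matrix.vecHead c * (g ⬝ᵥ g) = 0 := by
      have h3 := congrArg (fun u => u ⬝ᵥ g) hc
      simpa [add_dotProduct, smul_dotProduct, smul_eq_mul, hof,
        ← Matrix.dotProduct_mulVec, hker2] using h3
    have hch : Matrix.vecHead c = 0 := by
      rcases mul_eq_zero.mp h2 with h | h
      · exact h
      · exact absurd h hgg
    have hct : Matrix.vecTail c ᵥ* (M.submatrix r' id) = 0 := by
      rw [hch] at hc
      simpa [hof] using hc
    have h7 := hrows _ hct
    exact hc0 (funext fun p => Fin.cases hch (fun q => congrFun h7 q) p)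
  have hgv : g ⬝ᵥ v ≠ 0 := by rw [← key g]; exact hdetB
  have hα0 : α ≠ 0 := by
    intro h
    apply hgv
    rw [hαv, h]
    simp
  -- entries of v are in {-1,0,1}
  have hv_mem : ∀ j, v j = -1 ∨ v j = 0 ∨ v j = 1 := by
    intro j
    have h := hTU k r' (Fin.succAbove j)
    rcases Nat.even_or_odd (j : ℕ) with hp | hp
    · rw [hvj j, hp.neg_one_pow, one_mul]; exact h
    · rw [hvj j, hp.neg_one_pow, neg_one_mul]
      rcases h with h | h | h <;> rw [h] <;> norm_num
  -- Bezout
  obtain ⟨c, hc⟩ := exists_gcd_rep Finset.univ z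
  rw [hcop] at hc
  choose wv hwv hwvm using fun j => mem3_real_int (hv_mem j)
  have hvz : ∀ j, v j = α * (z j : ℝ) := by
    intro j
    rw [hαv]
    simp [hz]
  -- α is a nonzero integer
  have hαsum : α = ((∑ i, c i * wv i : ℤ) : ℝ) := by
    have h1 : α = α * ((∑ i, c i * z i : ℤ) : ℝ) := by rw [hc]; simp
    rw [h1]
    push_cast
    rw [Finset.mul_sum]
    refine Finset.sum_congr rfl fun i _ => ?_
    rw [hwv i, hvz i]
    ring
  set a : ℤ := ∑ i, c i * wv i with hadef
  have ha0 : a ≠ 0 := by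
    intro h
    apply hα0
    rw [hαsum, h]
    simp
  have hzj : ∀ j, z j = -1 ∨ z j = 0 ∨ z j = 1 := by
    intro j
    have h1 : ((a * z j : ℤ) : ℝ) = ((wv j : ℤ) : ℝ) := by
      push_cast
      rw [← hαsum, hwv j, hvz j]
    exact int_mul_mem3 ha0 (by exact_mod_cast h1) (hwvm j)
  constructor
  · intro i
    rw [hz]
    rcases hzj i with h | h | h <;> simp [h]
  · intro i
    -- the row i of M
    have hform : Matrix.of (Matrix.vecCons (fun j => M i j) (M.submatrix r' id))
        = M.submatrix (Fin.cons i r') id := by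
      ext a b
      refine Fin.cases ?_ (fun q => ?_) a <;>
        simp [Matrix.cons_val_zero, Matrix.cons_val_succ, Fin.cons_zero, Fin.cons_succ] <;> rfl
    have hd := hTU (k + 1) (Fin.cons i r') id
    rw [← hform, key] at hd
    obtain ⟨d, hd1, hd2⟩ := mem3_real_int hd
    have hMint : ∀ j, ∃ e : ℤ, (e : ℝ) = M i j ∧ (e = -1 ∨ e = 0 ∨ e = 1) := by
      intro j
      refine mem3_real_int ?_
      have h := hTU 1 ![i] ![j]
      rw [Matrix.det_fin_one] at h
      simpa using h
    choose E hE hEm using hMint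
    have hMg : M.mulVec g i = ((∑ j, E j * z j : ℤ) : ℝ) := by
      show (fun j => M i j) ⬝ᵥ g = _
      rw [hz]
      push_cast
      have hdot : (fun j => M i j) ⬝ᵥ (fun j => ((z j : ℤ) : ℝ)) = ∑ j, M i j * (z j : ℝ) := rfl
      rw [hdot]
      refine Finset.sum_congr rfl fun j _ => ?_
      rw [← hE j]
    set t : ℤ := ∑ j, E j * z j with htdef
    have h1 : ((a : ℝ)) * ((t : ℝ)) = ((d : ℝ)) := by
      rw [← hαsum, ← hMg, hd1]
      rw [hαv, dotProduct_smul, smul_eq_mul]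
      rfl
    have htd : a * t = d := by exact_mod_cast h1
    rcases int_mul_mem3 ha0 htd hd2 with h | h | h <;> rw [hMg, h] <;> norm_num
end

section
/- Let P = {x : Ax = b, Bx ≤ d} be an integral polyhedron with (A;B) totally unimodular, and let v₁, v₂ ∈ P be integral. If v₂ − v₁ = Σ_{i=1}^t λ_i g_i is a sign-compatible sum of circuits produced by the greedy step-length rule λ_i = min{(Bw_i)_j/(Bg_i)_j : (Bw_i)_j(Bg_i)_j > 0} (where w_i is the remaining difference), then every λ_i is a positive integer and every intermediate point v₁ + Σ_{i≤j} λ_i g_i is integral. -/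
set_option maxHeartbeats 1000000

open Matrix

noncomputable def zify (x : ℝ) : ℤ := if x = 1 then 1 else if x = -1 then -1 else 0

lemma zify_cast {x : ℝ} (h : x = -1 ∨ x = 0 ∨ x = 1) : ((zify x : ℤ) : ℝ) = x := by
  rcases h with h | h | h <;> norm_num [zify, h]

lemma key_circuit {n mA mB : ℕ}
    (A : Matrix (Fin mA) (Fin n) ℝ) (B : Matrix (Fin mB) (Fin n) ℝ)
    (hTU : ∀ (k : ℕ) (r : Fin k → Fin mA ⊕ Fin mB) (c : Fin k → Fin n),
      ((Matrix.fromRows A B).submatrix r c).det = -1 ∨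
      ((Matrix.fromRows A B).submatrix r c).det = 0 ∨
      ((Matrix.fromRows A B).submatrix r c).det = 1)
    (hpointed : (Matrix.fromRows A B).rank = n)
    (g : Fin n → ℝ) (zg : Fin n → ℤ) (hgz : g = fun j => (zg j : ℝ))
    (hgcd : Finset.univ.gcd zg = 1) (hg0 : g ≠ 0)
    (hAg : A.mulVec g = 0)
    (hmin : ¬ ∃ y : Fin n → ℝ, y ≠ 0 ∧ A.mulVec y = 0 ∧
        {j | B.mulVec y j ≠ 0} ⊂ {j | B.mulVec g j ≠ 0})
    (j : Fin mB) (hj : B.mulVec g j ≠ 0) :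
    B.mulVec g j = 1 ∨ B.mulVec g j = -1 := by
  classical
  -- the pointedness gives injectivity of `fromRows A B`
  have hinj : ∀ x : Fin n → ℝ, (Matrix.fromRows A B).mulVec x = 0 → x = 0 := by
    intro x hx
    have h1 : LinearMap.ker (Matrix.fromRows A B).mulVecLin = ⊥ := by
      have h2 := LinearMap.finrank_range_add_finrank_ker (Matrix.fromRows A B).mulVecLin
      rw [Module.finrank_pi] at h2
      simp only [Fintype.card_fin] at h2
      have : Module.finrank ℝ (LinearMap.ker (Matrix.fromRows A B).mulVecLin) = 0 := by
        have : (Matrix.fromRows A B).rank = Module.finrank ℝ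
            (LinearMap.range (Matrix.fromRows A B).mulVecLin) := rfl
        omega
      exact Submodule.finrank_eq_zero.mp this
    have : x ∈ LinearMap.ker (Matrix.fromRows A B).mulVecLin := by
      simpa [Matrix.mulVecLin_apply] using hx
    simpa [h1] using this
  -- the auxiliary matrix whose rows are `A` and the rows of `B` where `B g` vanishes
  set M : Matrix (Fin mA ⊕ Fin mB) (Fin n) ℝ :=
    Matrix.of (Sum.elim A (fun j' => if B.mulVec g j' = 0 then B j' else 0)) with hM
  have hMrow_inl : ∀ i, M (Sum.inl i) = A i := fun i => rfl
  have hrow : ∀ j', M (Sum.inr j') = if B.mulVec g j' = 0 then B j' else 0 := fun _ => rfl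
  have happ : ∀ (y : Fin n → ℝ) k, M.mulVec y k = M k ⬝ᵥ y := fun _ _ => rfl
  have hBapp : ∀ (y : Fin n → ℝ) j', B.mulVec y j' = B j' ⬝ᵥ y := fun _ _ => rfl
  have hAapp : ∀ (y : Fin n → ℝ) i, A.mulVec y i = A i ⬝ᵥ y := fun _ _ => rfl
  have hMmulVec : ∀ y : Fin n → ℝ, M.mulVec y = 0 ↔
      (A.mulVec y = 0 ∧ ∀ j', B.mulVec g j' = 0 → B.mulVec y j' = 0) := by
    intro y
    constructor
    · intro h
      constructor
      · funext i
        have := congrFun h (Sum.inl i)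
        rw [happ, hMrow_inl] at this
        simpa [hAapp] using this
      · intro j' hj'
        have := congrFun h (Sum.inr j')
        rw [happ, hrow, if_pos hj'] at this
        simpa [hBapp] using this
    · intro ⟨h1, h2⟩
      funext k
      rcases k with i | j'
      · rw [happ, hMrow_inl, ← hAapp, h1]; rfl
      · rw [happ, hrow]
        split_ifs with hz
        · rw [← hBapp, h2 j' hz]; rfl
        · simp
  have hMg : M.mulVec g = 0 := by
    rw [hMmulVec]
    exact ⟨hAg, fun j' hj' => hj'⟩
  -- the kernel of M is spanned by g
  have hker : ∀ y : Fin n → ℝ, M.mulVec y = 0 → ∃ c : ℝ, y = c • g := by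
    intro y hy
    rw [hMmulVec] at hy
    obtain ⟨hAy, hBy⟩ := hy
    by_cases hy' : (B.mulVec g j) • y - (B.mulVec y j) • g = 0
    · refine ⟨B.mulVec y j / B.mulVec g j, ?_⟩
      have := sub_eq_zero.mp hy'
      funext l
      have := congrFun this l
      simp only [Pi.smul_apply, smul_eq_mul] at this ⊢
      field_simp
      linarith [this]
    · exfalso
      apply hmin
      refine ⟨(B.mulVec g j) • y - (B.mulVec y j) • g, hy', ?_, ?_⟩
      · rw [Matrix.mulVec_sub, Matrix.mulVec_smul, Matrix.mulVec_smul, hAy, hAg]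
        simp
      · constructor
        · intro j' hj'
          simp only [Set.mem_setOf_eq] at hj' ⊢
          intro hBgj'
          apply hj'
          rw [Matrix.mulVec_sub, Matrix.mulVec_smul, Matrix.mulVec_smul]
          simp [hBgj', hBy j' hBgj']
        · intro hsub
          have := hsub (show j ∈ {j' | B.mulVec g j' ≠ 0} from hj)
          simp only [Set.mem_setOf_eq, Matrix.mulVec_sub, Matrix.mulVec_smul] at this
          apply this
          simp [mul_comm]
  -- kernel of M equals the span of g
  have hkerM : LinearMap.ker M.mulVecLin = Submodule.span ℝ {g} := by
    apply le_antisymm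
    · intro y hy
      rw [LinearMap.mem_ker, Matrix.mulVecLin_apply] at hy
      obtain ⟨c, rfl⟩ := hker y hy
      exact Submodule.smul_mem _ c (Submodule.mem_span_singleton_self g)
    · rw [Submodule.span_le, Set.singleton_subset_iff]
      simpa [LinearMap.mem_ker, Matrix.mulVecLin_apply] using hMg
  have hn : 0 < n := by
    rcases Nat.eq_zero_or_pos n with h | h
    · exfalso; apply hg0; funext l; exact absurd l.isLt (by omega)
    · exact h
  have hrankM : M.rank = n - 1 := by
    have h2 := LinearMap.finrank_range_add_finrank_ker M.mulVecLin
    rw [Module.finrank_pi] at h2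
    simp only [Fintype.card_fin] at h2
    have hk1 : Module.finrank ℝ (LinearMap.ker M.mulVecLin) = 1 := by
      rw [hkerM]
      exact finrank_span_singleton hg0
    have hMr : M.rank = Module.finrank ℝ (LinearMap.range M.mulVecLin) := rfl
    omega
  have hspan : Module.finrank ℝ (Submodule.span ℝ (Set.range M)) = n - 1 := by
    exact (Matrix.rank_eq_finrank_span_row M).symm.trans hrankM
  obtain ⟨bs, hbsub, hbspan, hbli⟩ := exists_linearIndependent ℝ (Set.range M)
  have hbsfin : bs.Finite := hbli.setFinite
  haveI := hbsfin.fintype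
  have hbscard : Fintype.card ↥bs = n - 1 := by
    rw [← Set.toFinset_card, ← finrank_span_set_eq_card hbli, hbspan]
    exact hspan
  set e : Fin (n - 1) ≃ ↥bs := (Fintype.equivFinOfCardEq hbscard).symm with he
  choose ρ hρ using fun x : ↥bs => hbsub x.2
  have hFR : ∀ x : ↥bs, Matrix.fromRows A B (ρ x) = (x : Fin n → ℝ) := by
    intro x
    rcases hxx : ρ x with i | j'
    · rw [← hρ x, hxx]; rfl
    · rw [← hρ x, hxx]
      rw [hrow]
      split_ifs with hz
      · rfl
      · exfalso
        have hx0 : (x : Fin n → ℝ) ≠ 0 := hbli.ne_zero x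
        apply hx0
        rw [← hρ x, hxx, hrow, if_neg hz]
  set k₀ : Fin n := ⟨n - 1, by omega⟩ with hk₀
  set r : Fin n → Fin mA ⊕ Fin mB := fun k =>
    if h : (k : ℕ) < n - 1 then ρ (e ⟨(k : ℕ), h⟩) else Sum.inr j with hrdef
  set N : Matrix (Fin n) (Fin n) ℝ := (Matrix.fromRows A B).submatrix r id with hNdef
  have hNrow : ∀ k : Fin n, N k = Matrix.fromRows A B (r k) := fun k => rfl
  have hNrow_lt : ∀ (k : Fin n) (h : (k : ℕ) < n - 1), N k = ((e ⟨(k : ℕ), h⟩ : ↥bs) : Fin n → ℝ) := by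
    intro k h
    rw [hNrow, hrdef]
    simp only [dif_pos h]
    exact hFR _
  have hNrow_last : ∀ (k : Fin n), ¬ ((k : ℕ) < n - 1) → N k = B j := by
    intro k h
    rw [hNrow, hrdef]
    simp only [dif_neg h]
    rfl
  -- N is invertible
  have hNdet : N.det ≠ 0 := by
    intro hdet0
    obtain ⟨x, hx0, hx⟩ := (Matrix.exists_mulVec_eq_zero_iff).mpr hdet0
    have hbs0 : ∀ v ∈ bs, v ⬝ᵥ x = 0 := by
      intro v hv
      obtain ⟨k, hk⟩ := e.surjective ⟨v, hv⟩
      have hkn : (k : ℕ) < n - 1 := k.isLt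
      have hkn' : (k : ℕ) < n := by omega
      have h1 := congrFun hx ⟨(k : ℕ), hkn'⟩
      have h2 : N ⟨(k : ℕ), hkn'⟩ = v := by
        rw [hNrow_lt ⟨(k : ℕ), hkn'⟩ hkn, Fin.eta k hkn, hk]
      have h3 : (N.mulVec x) ⟨(k : ℕ), hkn'⟩ = N ⟨(k : ℕ), hkn'⟩ ⬝ᵥ x := rfl
      rw [h3, h2] at h1
      exact h1
    have hspan0 : ∀ v ∈ Submodule.span ℝ bs, v ⬝ᵥ x = 0 := by
      intro v hv
      let φ : (Fin n → ℝ) →ₗ[ℝ] ℝ :=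
        { toFun := fun v => v ⬝ᵥ x
          map_add' := fun a b => add_dotProduct a b x
          map_smul' := fun c a => smul_dotProduct c a x }
      have : Submodule.span ℝ bs ≤ LinearMap.ker φ := by
        rw [Submodule.span_le]
        intro v hv
        exact hbs0 v hv
      exact this hv
    have hMx : M.mulVec x = 0 := by
      funext i
      rw [happ]
      exact hspan0 (M i) (hbspan ▸ Submodule.subset_span (Set.mem_range_self i))
    obtain ⟨c, rfl⟩ := hker x hMx
    have hlast := congrFun hx k₀
    rw [show (N.mulVec (c • g)) k₀ = N k₀ ⬝ᵥ (c • g) from rfl,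
      hNrow_last k₀ (by simp [hk₀]), dotProduct_smul] at hlast
    have hc : c = 0 := by
      have : (B j) ⬝ᵥ g = B.mulVec g j := rfl
      rw [this] at hlast
      rcases mul_eq_zero.mp hlast with h | h
      · exact h
      · exact absurd h hj
    apply hx0
    rw [hc, zero_smul]
  -- entries of fromRows A B are in {-1, 0, 1}
  have hentry : ∀ (i : Fin mA ⊕ Fin mB) (l : Fin n),
      Matrix.fromRows A B i l = -1 ∨ Matrix.fromRows A B i l = 0 ∨
      Matrix.fromRows A B i l = 1 := by
    intro i l
    have := hTU 1 (fun _ => i) (fun _ => l)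
    simpa [Matrix.det_fin_one] using this
  set NZ : Matrix (Fin n) (Fin n) ℤ := Matrix.of fun k l => zify (N k l) with hNZ
  have hNZcast : ∀ k l, ((NZ k l : ℤ) : ℝ) = N k l := fun k l => zify_cast (hentry (r k) l)
  have hmv : ∀ k, (((NZ.mulVec zg) k : ℤ) : ℝ) = N.mulVec g k := by
    intro k
    unfold Matrix.mulVec dotProduct
    push_cast
    apply Finset.sum_congr rfl
    intro l _
    rw [hNZcast]
    simp only [hgz]
  -- values of N.mulVec g
  have hNg0 : ∀ k : Fin n, k ≠ k₀ → (NZ.mulVec zg) k = 0 := by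
    intro k hk
    have hlt : (k : ℕ) < n - 1 := by
      have := k.isLt
      have : (k : ℕ) ≠ n - 1 := fun h => hk (Fin.ext h)
      omega
    have : N.mulVec g k = 0 := by
      rw [show (N.mulVec g) k = N k ⬝ᵥ g from rfl, hNrow_lt k hlt]
      have hmem : ((e ⟨(k : ℕ), hlt⟩ : ↥bs) : Fin n → ℝ) = M (ρ (e ⟨(k : ℕ), hlt⟩)) :=
        (hρ _).symm
      rw [hmem]
      have := congrFun hMg (ρ (e ⟨(k : ℕ), hlt⟩))
      rw [happ] at this
      exact this
    have := (hmv k).trans this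
    exact_mod_cast this
  have hNgk₀ : (((NZ.mulVec zg) k₀ : ℤ) : ℝ) = B.mulVec g j := by
    rw [hmv k₀, show (N.mulVec g) k₀ = N k₀ ⬝ᵥ g from rfl,
      hNrow_last k₀ (by simp [hk₀])]
    rfl
  -- determinant of NZ is a unit
  have hcastdet : ((NZ.det : ℤ) : ℝ) = N.det := by
    have hmap : N = NZ.map (Int.cast : ℤ → ℝ) := by
      ext k l
      rw [Matrix.map_apply, hNZcast]
    rw [hmap]
    have h := RingHom.map_det (Int.castRingHom ℝ) NZ
    simp only [RingHom.mapMatrix_apply, eq_intCast, Int.coe_castRingHom] at h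
    exact h
  have hNZunit : IsUnit NZ.det := by
    rcases hTU n r id with h | h | h
    · have : NZ.det = -1 := by
        have := hcastdet.trans (hNdef ▸ h)
        exact_mod_cast this
      rw [this]; exact IsUnit.neg isUnit_one
    · exact absurd (hcastdet ▸ (hNdef ▸ h) : _) (by rw [hcastdet] at *; exact absurd (hNdef ▸ h) hNdet)
    · have : NZ.det = 1 := by
        have := hcastdet.trans (hNdef ▸ h)
        exact_mod_cast this
      rw [this]; exact isUnit_one
  -- divisibility
  set cz : ℤ := (NZ.mulVec zg) k₀ with hcz
  have hdvd : ∀ l, cz ∣ zg l := by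
    intro l
    have hzg2 : zg = NZ⁻¹.mulVec (NZ.mulVec zg) := by
      rw [Matrix.mulVec_mulVec, Matrix.nonsing_inv_mul NZ hNZunit, Matrix.one_mulVec]
    have hl : zg l = ∑ k, NZ⁻¹ l k * (NZ.mulVec zg) k := by
      conv_lhs => rw [hzg2]
      rfl
    rw [hl]
    apply Finset.dvd_sum
    intro k _
    by_cases hk : k = k₀
    · rw [hk, ← hcz]
      exact Dvd.dvd.mul_left dvd_rfl _
    · rw [hNg0 k hk, mul_zero]
      exact dvd_zero _
  have hczu : cz = 1 ∨ cz = -1 := by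
    have h1 : cz ∣ Finset.univ.gcd zg := Finset.dvd_gcd (fun l _ => hdvd l)
    rw [hgcd] at h1
    exact Int.isUnit_iff.mp (isUnit_of_dvd_one h1)
  rcases hczu with h | h
  · left
    rw [← hNgk₀, h]
    norm_num
  · right
    rw [← hNgk₀, h]
    norm_num


/-- Let `P = {x : Ax = b, Bx ≤ d}` be an integral pointed polyhedron with
`(A;B)` totally unimodular, and `v₁, v₂ ∈ P` integral. If `v₂ - v₁ = Σ λ_i g_i` is a
sign-compatible sum of circuits (normalized to coprime integer components) produced by
the greedy step-length rule `λ_i = min{(Bw_i)_j/(Bg_i)_j : (Bw_i)_j (Bg_i)_j > 0}`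
(where `w_i` is the remaining difference), then each `λ_i` is a positive integer and
every intermediate point `v₁ + Σ_{l<i} λ_l g_l` is integral. -/
theorem tu_walk_integral {n mA mB : ℕ}
    (A : Matrix (Fin mA) (Fin n) ℝ) (B : Matrix (Fin mB) (Fin n) ℝ)
    (hTU : ∀ (k : ℕ) (r : Fin k → Fin mA ⊕ Fin mB) (c : Fin k → Fin n),
      ((Matrix.fromRows A B).submatrix r c).det = -1 ∨
      ((Matrix.fromRows A B).submatrix r c).det = 0 ∨
      ((Matrix.fromRows A B).submatrix r c).det = 1)
    (hpointed : (Matrix.fromRows A B).rank = n)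
    (b : Fin mA → ℝ) (d : Fin mB → ℝ)
    (v₁ v₂ : Fin n → ℝ)
    (z₁ z₂ : Fin n → ℤ) (hv₁int : v₁ = fun i => (z₁ i : ℝ)) (hv₂int : v₂ = fun i => (z₂ i : ℝ))
    (hv₁P : A.mulVec v₁ = b ∧ ∀ i, B.mulVec v₁ i ≤ d i)
    (hv₂P : A.mulVec v₂ = b ∧ ∀ i, B.mulVec v₂ i ≤ d i)
    (t : ℕ) (g : Fin t → Fin n → ℝ) (lam : Fin t → ℝ) (w : ℕ → Fin n → ℝ)
    (hw0 : w 0 = v₂ - v₁)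
    (hwrec : ∀ i : Fin t, w (i + 1) = w i - lam i • g i)
    (hwt : w t = 0)
    -- each g i is a circuit of P, normalized to coprime integer components
    (hcirc : ∀ i : Fin t,
      (∃ zg : Fin n → ℤ, g i = (fun j => (zg j : ℝ)) ∧ Finset.univ.gcd zg = 1) ∧
      g i ≠ 0 ∧ A.mulVec (g i) = 0 ∧
      ¬ ∃ y : Fin n → ℝ, y ≠ 0 ∧ A.mulVec y = 0 ∧
        {j | B.mulVec y j ≠ 0} ⊂ {j | B.mulVec (g i) j ≠ 0})
    -- sign-compatibility of each B g i with the remaining difference B w i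
    (hsign : ∀ (i : Fin t) (j : Fin mB), 0 ≤ B.mulVec (g i) j * B.mulVec (w i) j)
    -- greedy step-length rule
    (hgreedy : ∀ i : Fin t, ∃ j : Fin mB,
      0 < B.mulVec (w i) j * B.mulVec (g i) j ∧
      lam i = B.mulVec (w i) j / B.mulVec (g i) j ∧
      ∀ j' : Fin mB, 0 < B.mulVec (w i) j' * B.mulVec (g i) j' →
        lam i ≤ B.mulVec (w i) j' / B.mulVec (g i) j') :
    (∀ i : Fin t, ∃ k : ℤ, 0 < k ∧ lam i = (k : ℝ)) ∧
    (∀ i : ℕ, i ≤ t → ∃ zv : Fin n → ℤ,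
      (v₁ + ∑ l ∈ Finset.univ.filter (fun l : Fin t => (l : ℕ) < i), lam l • g l)
        = fun j => (zv j : ℝ)) := by
  classical
  have hstep : ∀ (i : Fin t) (zw : Fin n → ℤ), w i = (fun l => (zw l : ℝ)) →
      (∃ k : ℤ, 0 < k ∧ lam i = (k : ℝ)) ∧
      (∃ zw' : Fin n → ℤ, w ((i : ℕ) + 1) = fun l => (zw' l : ℝ)) := by
    intro i zw hzw
    obtain ⟨⟨zg, hgz, hgcd⟩, hg0, hAg, hmin⟩ := hcirc i
    obtain ⟨j, hprod, hlam, -⟩ := hgreedy i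
    have hBgj : B.mulVec (g i) j ≠ 0 := by
      intro h; rw [h, mul_zero] at hprod; exact lt_irrefl 0 hprod
    have hBg := key_circuit A B hTU hpointed (g i) zg hgz hgcd hg0 hAg hmin j hBgj
    have hBentry : ∀ l, ∃ z : ℤ, B j l = (z : ℝ) := by
      intro l
      have h := hTU 1 (fun _ => Sum.inr j) (fun _ => l)
      simp only [Matrix.det_fin_one, Matrix.submatrix_apply, Matrix.fromRows_apply_inr] at h
      rcases h with h | h | h
      exacts [⟨-1, by rw [h]; norm_num⟩, ⟨0, by rw [h]; norm_num⟩, ⟨1, by rw [h]; norm_num⟩]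
    choose bz hbz using hBentry
    have hBw : B.mulVec (w ↑i) j = ((∑ l, bz l * zw l : ℤ) : ℝ) := by
      rw [hzw]
      unfold Matrix.mulVec dotProduct
      push_cast
      exact Finset.sum_congr rfl fun l _ => by rw [hbz]
    set az : ℤ := ∑ l, bz l * zw l with haz
    have hlampos : 0 < lam i := by
      rw [hlam, div_pos_iff]
      rcases mul_pos_iff.mp hprod with ⟨h1, h2⟩ | ⟨h1, h2⟩
      · exact Or.inl ⟨h1, h2⟩
      · exact Or.inr ⟨h1, h2⟩
    have hlamk : ∃ k : ℤ, lam i = (k : ℝ) := by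
      rcases hBg with h1 | h1
      · exact ⟨az, by rw [hlam, h1, div_one, hBw]⟩
      · refine ⟨-az, ?_⟩
        rw [hlam, h1, hBw]
        push_cast
        ring
    obtain ⟨k, hk⟩ := hlamk
    have hkpos : 0 < k := by exact_mod_cast hk ▸ hlampos
    refine ⟨⟨k, hkpos, hk⟩, ⟨fun l => zw l - k * zg l, ?_⟩⟩
    rw [hwrec i]
    funext l
    rw [Pi.sub_apply, hzw, Pi.smul_apply, hk, hgz, smul_eq_mul]
    push_cast
    ring
  have hwint : ∀ i : ℕ, i ≤ t → ∃ z : Fin n → ℤ, w i = fun l => (z l : ℝ) := by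
    intro i
    induction i with
    | zero =>
      intro _
      refine ⟨fun l => z₂ l - z₁ l, ?_⟩
      rw [hw0, hv₁int, hv₂int]
      funext l
      push_cast
      simp
    | succ i ih =>
      intro h
      have hi : i < t := h
      obtain ⟨z, hz⟩ := ih (le_of_lt hi)
      exact (hstep ⟨i, hi⟩ z hz).2
  have hsum : ∀ i : ℕ, i ≤ t →
      (∑ l ∈ Finset.univ.filter (fun l : Fin t => (l : ℕ) < i), lam l • g l) = w 0 - w i := by
    intro i
    induction i with
    | zero =>
      intro _
      have hempty : Finset.univ.filter (fun l : Fin t => (l : ℕ) < 0) = ∅ :=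
        Finset.filter_eq_empty_iff.mpr (fun l _ => Nat.not_lt_zero _)
      rw [hempty, Finset.sum_empty, sub_self]
    | succ i ih =>
      intro h
      have hi : i < t := h
      have hins : Finset.univ.filter (fun l : Fin t => (l : ℕ) < i + 1) =
          insert (⟨i, hi⟩ : Fin t) (Finset.univ.filter (fun l : Fin t => (l : ℕ) < i)) := by
        ext l
        simp only [Finset.mem_filter, Finset.mem_insert, Finset.mem_univ, true_and, Fin.ext_iff]
        omega
      rw [hins, Finset.sum_insert (by simp), ih (le_of_lt hi),
        show w (i + 1) = w i - lam ⟨i, hi⟩ • g ⟨i, hi⟩ from hwrec ⟨i, hi⟩]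
      abel
  refine ⟨?_, ?_⟩
  · intro i
    obtain ⟨z, hz⟩ := hwint i (le_of_lt i.isLt)
    exact (hstep i z hz).1
  · intro i hi
    obtain ⟨zwi, hzwi⟩ := hwint i hi
    refine ⟨fun l => z₂ l - zwi l, ?_⟩
    rw [hsum i hi, hw0, hv₁int, hv₂int, hzwi]
    funext l
    push_cast
    simp
    ring
end
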